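/- arXiv:1111.0376 — 8 statements merged into one kernel-verified Lean document; each statement's English description precedes it below -/
import Mathlib

section
/- Let w^{i}_{r,t} denote the number of one-dimensional walks from 0 to i consisting of t steps of length 2 and r − 2t steps of length 1 (each step going left or right). If r − 2t is an even positive integer and i ≥ 0, then w^{2i}_{r,t} ≥ w^{2(i+1)}_{r,t}. In particular, if r is divisible by 4 then w^{0}_{r,t} ≥ w^{2}_{r,t}. -/
open Finset

/-- `walkCount t m i` is the number of one-dimensional walks consisting of `t` steps of
length 2 and `m` steps of length 1 (each going left or right) whose signed sum is `i`;
so `w^{i}_{r,t} = walkCount t (r - 2t) i`. -/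
def walkCount (t m : ℕ) (i : ℤ) : ℕ :=
  ((Finset.univ : Finset ((Fin t → Bool) × (Fin m → Bool))).filter
    (fun p => (∑ k, (if p.1 k then (2 : ℤ) else -2)) +
              (∑ k, (if p.2 k then (1 : ℤ) else -1)) = i)).card

/-- signed ±2 sum in terms of the number of `true`s. -/
lemma sumTwo_eq (t : ℕ) (f : Fin t → Bool) :
    (∑ k, (if f k then (2 : ℤ) else -2)) =
      4 * ((univ.filter (fun k => f k = true)).card : ℤ) - 2 * t := by
  have h : ∀ k : Fin t, (if f k then (2 : ℤ) else -2)
      = 4 * (if f k = true then (1 : ℤ) else 0) - 2 := by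
    intro k; cases hk : f k <;> simp [hk]
  rw [Finset.sum_congr rfl fun k _ => h k, Finset.sum_sub_distrib, ← Finset.mul_sum,
    Finset.sum_boole, Finset.sum_const, Finset.card_univ, Fintype.card_fin]
  ring

lemma walkCount_zero (t : ℕ) (j : ℤ) :
    walkCount t 0 j =
      (univ.filter (fun f : Fin t → Bool =>
        4 * ((univ.filter (fun k => f k = true)).card : ℤ) - 2 * t = j)).card := by
  unfold walkCount
  rw [Finset.card_filter, Finset.card_filter, Fintype.sum_prod_type]
  apply Finset.sum_congr rfl
  intro f _
  rw [Fintype.sum_unique]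
  simp [sumTwo_eq]

lemma count_trues (t a : ℕ) :
    (univ.filter (fun f : Fin t → Bool =>
      (univ.filter (fun k => f k = true)).card = a)).card = t.choose a := by
  classical
  have hpc := Finset.card_powersetCard a (univ : Finset (Fin t))
  rw [Finset.card_fin] at hpc
  rw [← hpc]
  refine Finset.card_bij' (fun f _ => univ.filter (fun k => f k = true))
    (fun s _ => fun k => decide (k ∈ s)) ?_ ?_ ?_ ?_
  · intro f hf
    simp only [Finset.mem_filter, Finset.mem_univ, true_and] at hf
    simp [Finset.mem_powersetCard, hf]
  · intro s hs
    simp only [Finset.mem_powersetCard] at hs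
    simp only [Finset.mem_filter, Finset.mem_univ, true_and]
    rw [← hs.2]
    congr 1
    ext k
    simp
  · intro f hf
    funext k
    simp
  · intro s hs
    ext k
    simp

/-- the base distribution decreases in steps of 4 from `-1` on. -/
lemma base_step (t : ℕ) (j : ℤ) (hj : -1 ≤ j) :
    walkCount t 0 (j + 4) ≤ walkCount t 0 j := by
  classical
  rw [walkCount_zero, walkCount_zero]
  by_cases h : ∃ a : ℕ, j + 2 * t = 4 * a
  · obtain ⟨a, ha⟩ := h
    have e1 : (univ.filter (fun f : Fin t → Bool =>
        4 * ((univ.filter (fun k => f k = true)).card : ℤ) - 2 * t = j))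
        = univ.filter (fun f : Fin t → Bool =>
          (univ.filter (fun k => f k = true)).card = a) := by
      apply Finset.filter_congr
      intro f _
      constructor <;> intro hh <;> linarith
    have e2 : (univ.filter (fun f : Fin t → Bool =>
        4 * ((univ.filter (fun k => f k = true)).card : ℤ) - 2 * t = j + 4))
        = univ.filter (fun f : Fin t → Bool =>
          (univ.filter (fun k => f k = true)).card = a + 1) := by
      apply Finset.filter_congr
      intro f _
      constructor <;> intro hh <;> linarith
    rw [e1, e2, count_trues, count_trues]
    -- now `t.choose (a+1) ≤ t.choose a` since `t ≤ 2*a + 1`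
    have hta : t - a ≤ a + 1 := by omega
    have h1 : t.choose (a + 1) * (a + 1) ≤ t.choose a * (a + 1) :=
      (Nat.choose_succ_right_eq t a) ▸ Nat.mul_le_mul_left _ hta
    exact Nat.le_of_mul_le_mul_right h1 (Nat.succ_pos a)
  · have e2 : (univ.filter (fun f : Fin t → Bool =>
        4 * ((univ.filter (fun k => f k = true)).card : ℤ) - 2 * t = j + 4)) = ∅ := by
      rw [Finset.filter_eq_empty_iff]
      intro f _
      intro hh
      exact h ⟨(univ.filter (fun k => f k = true)).card - 1, by omega⟩
    rw [e2]
    simp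

/-- symmetry. -/
lemma walkCount_neg (t m : ℕ) (i : ℤ) : walkCount t m (-i) = walkCount t m i := by
  classical
  have flip : ∀ (n : ℕ) (c : ℤ) (f : Fin n → Bool),
      (∑ k, (if (!f k) = true then c else -c)) = -(∑ k, (if f k = true then c else -c)) := by
    intro n c f
    rw [← Finset.sum_neg_distrib]
    apply Finset.sum_congr rfl
    intro k _
    cases f k <;> simp
  unfold walkCount
  refine Finset.card_bij' (fun p _ => (fun k => ! p.1 k, fun k => ! p.2 k))
    (fun p _ => (fun k => ! p.1 k, fun k => ! p.2 k)) ?_ ?_ ?_ ?_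
  · intro p hp
    simp only [Finset.mem_filter, Finset.mem_univ, true_and] at hp ⊢
    rw [flip, flip]
    linarith
  · intro p hp
    simp only [Finset.mem_filter, Finset.mem_univ, true_and] at hp ⊢
    rw [flip, flip]
    linarith
  · intro p _
    ext k <;> simp
  · intro p _
    ext k <;> simp

/-- the recurrence peeling off one ±1 step. -/
lemma walkCount_succ (t m : ℕ) (i : ℤ) :
    walkCount t (m + 1) i = walkCount t m (i - 1) + walkCount t m (i + 1) := by
  classical
  unfold walkCount
  rw [Finset.card_filter, Finset.card_filter, Finset.card_filter, Fintype.sum_prod_type,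
    Fintype.sum_prod_type, Fintype.sum_prod_type]
  rw [← Finset.sum_add_distrib]
  apply Finset.sum_congr rfl
  intro f _
  have main : (∑ q : Bool × (Fin m → Bool),
      if (∑ k, (if f k then (2:ℤ) else -2)) +
        (∑ k, (if ((Fin.consEquiv (fun _ : Fin (m + 1) => Bool)) q) k then (1:ℤ) else -1)) = i
      then (1:ℕ) else 0)
      = ∑ g : Fin (m + 1) → Bool,
        if (∑ k, (if f k then (2:ℤ) else -2)) +
          (∑ k, (if g k then (1:ℤ) else -1)) = i then (1:ℕ) else 0 :=
    Fintype.sum_equiv (Fin.consEquiv (fun _ : Fin (m + 1) => Bool)) _ _ (fun q => rfl)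
  rw [← main, Fintype.sum_prod_type, Fintype.sum_bool]
  have key : ∀ (b : Bool) (g : Fin m → Bool),
      (∑ k, (if ((Fin.consEquiv (fun _ : Fin (m + 1) => Bool)) (b, g)) k then (1:ℤ) else -1))
        = (if b then (1:ℤ) else -1) + ∑ k, (if g k then (1:ℤ) else -1) := by
    intro b g
    rw [Fin.sum_univ_succ]
    simp [Fin.consEquiv, Fin.cons_zero, Fin.cons_succ]
  have hT : ∀ g : Fin m → Bool,
      ((∑ k, (if f k then (2:ℤ) else -2)) +
        (∑ k, (if ((Fin.consEquiv (fun _ : Fin (m + 1) => Bool)) (true, g)) k then (1:ℤ) else -1)) = i)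
      = ((∑ k, (if f k then (2:ℤ) else -2)) +
        (∑ k, (if g k then (1:ℤ) else -1)) = i - 1) := by
    intro g
    rw [key]
    simp only [if_true]
    apply propext
    constructor <;> intro hh <;> linarith
  have hF : ∀ g : Fin m → Bool,
      ((∑ k, (if f k then (2:ℤ) else -2)) +
        (∑ k, (if ((Fin.consEquiv (fun _ : Fin (m + 1) => Bool)) (false, g)) k then (1:ℤ) else -1)) = i)
      = ((∑ k, (if f k then (2:ℤ) else -2)) +
        (∑ k, (if g k then (1:ℤ) else -1)) = i + 1) := by
    intro g
    rw [key]
    simp only [Bool.false_eq_true, if_false]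
    apply propext
    constructor <;> intro hh <;> linarith
  simp only [hT, hF]

lemma walkCount_key (t : ℕ) : ∀ m : ℕ, ∀ i : ℤ, 0 ≤ i →
    walkCount t (m + 1) (i + 2) ≤ walkCount t (m + 1) i := by
  intro m
  induction m with
  | zero =>
    intro i hi
    rw [walkCount_succ, walkCount_succ]
    have e1 : i + 2 - 1 = i + 1 := by ring
    have e2 : i + 2 + 1 = (i - 1) + 4 := by ring
    rw [e1, e2, add_comm (walkCount t 0 (i - 1))]
    exact Nat.add_le_add_left (base_step t (i - 1) (by omega)) _
  | succ m ih =>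
    intro i hi
    rw [walkCount_succ t (m + 1) (i + 2), walkCount_succ t (m + 1) i]
    have e1 : i + 2 - 1 = (i + 1) := by ring
    have e2 : i + 2 + 1 = (i + 1) + 2 := by ring
    rw [e1, e2]
    have hA : walkCount t (m + 1) ((i + 1) + 2) ≤ walkCount t (m + 1) (i + 1) :=
      ih (i + 1) (by omega)
    have hB : walkCount t (m + 1) (i + 1) ≤ walkCount t (m + 1) (i - 1) := by
      rcases eq_or_lt_of_le hi with h0 | h0
      · have hi0 : i = 0 := h0.symm
        subst hi0
        have hsym := walkCount_neg t (m + 1) 1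
        rw [show (0:ℤ) - 1 = -1 from by ring, hsym]
        norm_num
      · have hstep := ih (i - 1) (by omega)
        rwa [show (i - 1) + 2 = i + 1 from by ring] at hstep
    exact Nat.add_le_add hB hA

/-- If `r - 2t` is an even positive integer and `i ≥ 0`, then
`w^{2i}_{r,t} ≥ w^{2(i+1)}_{r,t}`; in particular if `4 ∣ r` then `w^{0}_{r,t} ≥ w^{2}_{r,t}`. -/
theorem walkCount_antitone (r t : ℕ) (hrt : 2 * t < r) (heven : Even (r - 2 * t)) :
    (∀ i : ℕ, walkCount t (r - 2 * t) (2 * (i + 1)) ≤ walkCount t (r - 2 * t) (2 * i)) ∧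
    (4 ∣ r → walkCount t (r - 2 * t) 2 ≤ walkCount t (r - 2 * t) 0) := by
  obtain ⟨m, hm⟩ : ∃ m, r - 2 * t = m + 1 := ⟨r - 2 * t - 1, by omega⟩
  have main : ∀ i : ℕ, walkCount t (r - 2 * t) (2 * ((i : ℤ) + 1))
      ≤ walkCount t (r - 2 * t) (2 * i) := by
    intro i
    rw [hm, show (2 * ((i : ℤ) + 1)) = 2 * (i : ℤ) + 2 from by ring]
    exact walkCount_key t m (2 * i) (by positivity)
  refine ⟨main, fun _ => ?_⟩
  have := main 0
  norm_num at this
  exact this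
end

section
/- Let x^{i}_{r,0} = E[|i + Σ_{k=1}^{r} ε_k|] where ε_1,…,ε_r are independent uniform ±1 random variables. Then for all integers i, i' with 0 ≤ |i'| ≤ |i| − 2 and all r ≥ 0, x^{i}_{r,0} > x^{i'}_{r,0}. -/
open Finset

/-- `walkExp i t m` is the expected absolute value of the endpoint of a random walk
started at `i` with `t` independent uniform ±2 steps and `m` independent uniform ±1
steps; so `x^{i}_{r,t} = walkExp i t (r - 2t)`. -/
noncomputable def walkExp (i : ℤ) (t m : ℕ) : ℝ :=
  (∑ p : (Fin t → Bool) × (Fin m → Bool),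
    |(i : ℝ) + (∑ k, (if p.1 k then (2 : ℝ) else -2)) +
      (∑ k, (if p.2 k then (1 : ℝ) else -1))|) / 2 ^ (t + m)

/-- `Ssum r p` is the endpoint of the walk of signs `p`. -/
noncomputable def Ssum (r : ℕ) (p : Fin r → Bool) : ℝ :=
  ∑ k, (if p k then (1 : ℝ) else -1)

lemma abs_add_abs_sub_eq (x y : ℝ) : |x + y| + |x - y| = 2 * max |x| |y| := by
  rcases abs_cases x with ⟨hx, hx'⟩ | ⟨hx, hx'⟩ <;>
    rcases abs_cases y with ⟨hy, hy'⟩ | ⟨hy, hy'⟩ <;>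
    rcases abs_cases (x + y) with ⟨h1, h1'⟩ | ⟨h1, h1'⟩ <;>
    rcases abs_cases (x - y) with ⟨h2, h2'⟩ | ⟨h2, h2'⟩ <;>
    rw [max_def] <;> split_ifs <;> linarith

lemma Ssum_neg (r : ℕ) (p : Fin r → Bool) : Ssum r (fun k => !(p k)) = -Ssum r p := by
  unfold Ssum
  rw [← Finset.sum_neg_distrib]
  apply Finset.sum_congr rfl
  intro k _
  cases hpk : p k <;> simp [hpk]

/-- closed form: `walkExp c 0 r = (∑ p, max |c| |S p|) / 2 ^ r`. -/
lemma walkExp_closed (r : ℕ) (c : ℤ) :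
    walkExp c 0 r = (∑ p : Fin r → Bool, max |(c : ℝ)| |Ssum r p|) / 2 ^ r := by
  unfold walkExp
  rw [Fintype.sum_prod_type]
  have hcollapse : ∀ q : Fin 0 → Bool,
      (∑ p : Fin r → Bool,
        |(c : ℝ) + (∑ k, (if q k then (2 : ℝ) else -2)) +
          (∑ k, (if p k then (1 : ℝ) else -1))|)
      = ∑ p : Fin r → Bool, |(c : ℝ) + Ssum r p| := by
    intro q
    simp [Ssum]
  rw [Finset.sum_congr rfl (fun q _ => hcollapse q), Finset.sum_const]
  simp only [Finset.card_univ]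
  have hcard : Fintype.card (Fin 0 → Bool) = 1 := by simp
  rw [hcard, one_smul]
  congr 1
  · -- ∑ |c + S p| = ∑ max |c| |S p|
    have hswap : (∑ p : Fin r → Bool, |(c : ℝ) + Ssum r p|)
        = ∑ p : Fin r → Bool, |(c : ℝ) - Ssum r p| := by
      refine Fintype.sum_equiv
        ⟨fun p k => !(p k), fun p k => !(p k), fun p => by funext k; simp,
          fun p => by funext k; simp⟩ _ _ ?_
      intro p
      show |(c : ℝ) + Ssum r p| = |(c : ℝ) - Ssum r (fun k => !(p k))|
      rw [Ssum_neg]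
      ring_nf
    have h2 : 2 * (∑ p : Fin r → Bool, |(c : ℝ) + Ssum r p|)
        = 2 * ∑ p : Fin r → Bool, max |(c : ℝ)| |Ssum r p| := by
      calc 2 * (∑ p : Fin r → Bool, |(c : ℝ) + Ssum r p|)
          = (∑ p : Fin r → Bool, |(c : ℝ) + Ssum r p|)
            + ∑ p : Fin r → Bool, |(c : ℝ) - Ssum r p| := by rw [← hswap]; ring
        _ = ∑ p : Fin r → Bool, (|(c : ℝ) + Ssum r p| + |(c : ℝ) - Ssum r p|) := by
            rw [Finset.sum_add_distrib]
        _ = ∑ p : Fin r → Bool, 2 * max |(c : ℝ)| |Ssum r p| := by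
            exact Finset.sum_congr rfl fun p _ => abs_add_abs_sub_eq _ _
        _ = 2 * ∑ p : Fin r → Bool, max |(c : ℝ)| |Ssum r p| := by
            rw [Finset.mul_sum]
    linarith
  · norm_num

lemma alt_sum (r : ℕ) :
    (∑ k : Fin r, (if k.val % 2 = 0 then (1 : ℝ) else -1))
      = if r % 2 = 0 then 0 else 1 := by
  induction r with
  | zero => simp
  | succ n ih =>
    rw [Fin.sum_univ_castSucc]
    simp only [Fin.coe_castSucc, Fin.val_last]
    rw [ih]
    rcases Nat.even_or_odd n with he | ho
    · have h1 : n % 2 = 0 := Nat.even_iff.mp he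
      have h2 : (n + 1) % 2 = 1 := by omega
      simp [h1, h2]
    · have h1 : n % 2 = 1 := Nat.odd_iff.mp ho
      have h2 : (n + 1) % 2 = 0 := by omega
      simp [h1, h2]

/-- For all integers `i, i'` with `|i'| ≤ |i| − 2` and all `r ≥ 0`,
`x^{i}_{r,0} > x^{i'}_{r,0}`. -/
theorem walkExp_strict_mono_start (r : ℕ) (i i' : ℤ) (h : |i'| + 2 ≤ |i|) :
    walkExp i' 0 r < walkExp i 0 r := by
  rw [walkExp_closed, walkExp_closed]
  have hpos : (0 : ℝ) < 2 ^ r := by positivity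
  rw [div_lt_div_iff_of_pos_right hpos]
  have habs : |(i' : ℝ)| + 2 ≤ |(i : ℝ)| := by exact_mod_cast h
  apply Finset.sum_lt_sum
  · intro p _
    exact max_le_max (by linarith) le_rfl
  · refine ⟨fun k => decide (k.val % 2 = 0), Finset.mem_univ _, ?_⟩
    have hS : |Ssum r (fun k => decide (k.val % 2 = 0))| ≤ 1 := by
      have : Ssum r (fun k => decide (k.val % 2 = 0))
          = ∑ k : Fin r, (if k.val % 2 = 0 then (1 : ℝ) else -1) := by
        unfold Ssum
        exact Finset.sum_congr rfl fun k _ => by by_cases hk : k.val % 2 = 0 <;> simp [hk]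
      rw [this, alt_sum]
      split_ifs <;> norm_num
    have h1 : |(i' : ℝ)| ≥ 0 := abs_nonneg _
    have h2 : |(i : ℝ)| ≥ 2 := by linarith
    exact lt_of_lt_of_le (max_lt (by linarith) (by linarith)) (le_max_left _ _)
end

section
/- Let x^{0}_{r,t} denote the expected absolute value of the endpoint of a random walk started at 0 with t independent uniform ±2 steps and r − 2t independent uniform ±1 steps (r ≥ 2t). Then for every r ≥ 2, x^{0}_{r,1} > x^{0}_{r,0}; that is, replacing two unit steps by one double step strictly increases the expected distance from the origin. -/
open Finset

noncomputable def Swalk (m : ℕ) (q : Fin m → Bool) : ℝ :=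
  ∑ k, (if q k then (1 : ℝ) else -1)

noncomputable def Awalk (m : ℕ) (c : ℝ) : ℝ :=
  ∑ q : Fin m → Bool, |c + Swalk m q|

lemma Swalk_cons (m : ℕ) (b : Bool) (q : Fin m → Bool) :
    Swalk (m+1) (Fin.cons b q) = (if b then (1:ℝ) else -1) + Swalk m q := by
  unfold Swalk
  rw [Fin.sum_univ_succ]
  simp [Fin.cons_zero, Fin.cons_succ]

lemma sum_fun_succ (m : ℕ) (g : (Fin (m+1) → Bool) → ℝ) :
    ∑ q : Fin (m+1) → Bool, g q = ∑ b : Bool, ∑ q : Fin m → Bool, g (Fin.cons b q) := by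
  rw [← Equiv.sum_comp (Fin.consEquiv fun _ => Bool) g, Fintype.sum_prod_type]
  rfl

lemma exists_small (m : ℕ) : ∃ q : Fin m → Bool, |Swalk m q| ≤ 1 := by
  induction m with
  | zero => exact ⟨fun i => true, by simp [Swalk]⟩
  | succ n ih =>
    obtain ⟨q, hq⟩ := ih
    rw [abs_le] at hq
    by_cases h : 0 ≤ Swalk n q
    · refine ⟨Fin.cons false q, ?_⟩
      rw [Swalk_cons, abs_le]; constructor <;> simp <;> linarith
    · refine ⟨Fin.cons true q, ?_⟩
      rw [Swalk_cons, abs_le]; constructor <;> simp <;> linarith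

lemma pointwise (x : ℝ) : 2 * |x| ≤ |2 + x| + |(-2) + x| := by
  calc 2 * |x| = |(2 + x) + ((-2) + x)| := by rw [show (2+x)+((-2)+x) = 2*x by ring, abs_mul]; simp
  _ ≤ _ := abs_add_le _ _

lemma pointwise_strict (x : ℝ) (hx : |x| ≤ 1) : 2 * |x| < |2 + x| + |(-2) + x| := by
  have h4 : (4:ℝ) = |(2 + x) - ((-2) + x)| := by norm_num
  have := abs_sub (2+x) ((-2)+x)
  have := abs_abs x ▸ hx
  linarith [abs_sub (2+x) ((-2)+x), h4 ▸ abs_sub (2+x) ((-2)+x)]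

lemma key (m : ℕ) : 2 * Awalk m 0 < Awalk m 2 + Awalk m (-2) := by
  unfold Awalk
  rw [← Finset.sum_add_distrib, Finset.mul_sum]
  obtain ⟨q₀, hq₀⟩ := exists_small m
  refine Finset.sum_lt_sum (fun q _ => by simpa using pointwise (Swalk m q)) ⟨q₀, Finset.mem_univ _, ?_⟩
  simpa using pointwise_strict (Swalk m q₀) hq₀

/-- For every `r ≥ 2`, `x^{0}_{r,0} < x^{0}_{r,1}`: replacing two unit steps by one
double step strictly increases the expected distance from the origin. -/
theorem walkExp_double_step_increases (r : ℕ) (hr : 2 ≤ r) :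
    walkExp 0 0 r < walkExp 0 1 (r - 2) := by
  obtain ⟨m, rfl⟩ : ∃ m, r = m + 2 := ⟨r - 2, by omega⟩
  have hm : m + 2 - 2 = m := by omega
  rw [hm]
  have h0 : walkExp 0 0 (m+2) = (Awalk m 2 + 2 * Awalk m 0 + Awalk m (-2)) / 2 ^ (m+2) := by
    unfold walkExp
    simp only [Fintype.sum_prod_type, Fin.sum_univ_zero, Int.cast_zero, zero_add, add_zero,
      Finset.univ_unique, Finset.sum_singleton]
    have e2 : ∑ q : Fin (m+2) → Bool, |Swalk (m+2) q|
        = Awalk m 2 + 2 * Awalk m 0 + Awalk m (-2) := by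
      rw [sum_fun_succ (m+1) (fun q => |Swalk (m+2) q|), Fintype.sum_bool]
      simp only [Swalk_cons, if_true, if_false]
      simp only [sum_fun_succ m, Fintype.sum_bool, Swalk_cons]
      unfold Awalk
      simp only [← add_assoc]
      norm_num
      ring
    exact congrArg (fun z => z / 2 ^ (m+2)) e2
  have h1 : walkExp 0 1 m = (Awalk m 2 + Awalk m (-2)) / 2 ^ (m+1) := by
    unfold walkExp
    simp only [Fintype.sum_prod_type, Int.cast_zero, zero_add, Fin.sum_univ_one]
    rw [← Equiv.sum_comp (Equiv.funUnique (Fin 1) Bool).symm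
      (fun p1 => ∑ q : Fin m → Bool,
        |(if p1 0 then (2:ℝ) else -2) + ∑ k, if q k then (1:ℝ) else -1|),
      Fintype.sum_bool]
    simp only [Equiv.funUnique_symm_apply, Function.const_apply, if_true, if_false]
    norm_num [uniqueElim_const]
    unfold Awalk Swalk
    ring_nf
  rw [h0, h1]
  have hk := key m
  have hp : (0:ℝ) < 2 ^ (m+1) := by positivity
  rw [div_lt_div_iff₀ (by positivity) hp]
  have : (2:ℝ)^(m+2) = 2 * 2^(m+1) := by ring
  rw [this]
  nlinarith [hk]
end

section
/- With x^{i}_{r,t} the expected absolute endpoint of a random walk started at i with t double (±2) steps and r − 2t unit (±1) steps, and δx^{i}_{r,t} = x^{i}_{r,t} − x^{i}_{r,t−1}: if r is divisible by 4, then δx^{0}_{r,1} > δx^{0}_{r,t} for all 2 ≤ t ≤ r/2. That is, the marginal gain in expected distance from the first double step strictly exceeds that of every later double step. -/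
open Finset

/-- integer endpoint of the walk determined by sign choices `p`. -/
def ep (t m : ℕ) (p : (Fin t → Bool) × (Fin m → Bool)) : ℤ :=
  (∑ k, if p.1 k then (2:ℤ) else -2) + (∑ k, if p.2 k then (1:ℤ) else -1)

/-- sum of `h` over all walks. -/
noncomputable def Aw (t m : ℕ) (h : ℤ → ℝ) : ℝ :=
  ∑ p : (Fin t → Bool) × (Fin m → Bool), h (ep t m p)

noncomputable def Cnt (t m : ℕ) (j : ℤ) : ℝ := Aw t m (fun z => if z = j then 1 else 0)

lemma Aw_add (t m : ℕ) (h1 h2 : ℤ → ℝ) :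
    Aw t m (fun z => h1 z + h2 z) = Aw t m h1 + Aw t m h2 := by
  simpa [Aw] using Finset.sum_add_distrib

lemma Aw_mul (t m : ℕ) (c : ℝ) (h : ℤ → ℝ) :
    Aw t m (fun z => c * h z) = c * Aw t m h := by
  simp [Aw, Finset.mul_sum]

lemma ep_cons_right (t m : ℕ) (f : Fin t → Bool) (b : Bool) (g : Fin m → Bool) :
    ep t (m+1) (f, Fin.cons b g) = ep t m (f, g) + (if b then 1 else -1) := by
  simp [ep, Fin.sum_univ_succ]
  ring

lemma ep_cons_left (t m : ℕ) (b : Bool) (f : Fin t → Bool) (g : Fin m → Bool) :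
    ep (t+1) m (Fin.cons b f, g) = ep t m (f, g) + (if b then 2 else -2) := by
  simp [ep, Fin.sum_univ_succ]
  ring

lemma Aw_succ_right (t m : ℕ) (h : ℤ → ℝ) :
    Aw t (m+1) h = Aw t m (fun z => h (z+1) + h (z-1)) := by
  unfold Aw
  rw [Fintype.sum_prod_type, Fintype.sum_prod_type]
  refine Finset.sum_congr rfl fun f _ => ?_
  rw [← Equiv.sum_comp (Fin.consEquiv fun _ : Fin (m+1) => Bool)
      (fun g => h (ep t (m+1) (f, g))), Fintype.sum_prod_type, Fintype.sum_bool]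
  rw [← Finset.sum_add_distrib]
  refine Finset.sum_congr rfl fun g _ => ?_
  simp only [Fin.consEquiv, Equiv.coe_fn_mk, ep_cons_right]
  norm_num [sub_eq_add_neg]

lemma Aw_succ_left (t m : ℕ) (h : ℤ → ℝ) :
    Aw (t+1) m h = Aw t m (fun z => h (z+2) + h (z-2)) := by
  unfold Aw
  rw [Fintype.sum_prod_type, Fintype.sum_prod_type]
  rw [← Equiv.sum_comp (Fin.consEquiv fun _ : Fin (t+1) => Bool)
      (fun f => ∑ g : Fin m → Bool, h (ep (t+1) m (f, g))), Fintype.sum_prod_type,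
      Fintype.sum_bool]
  rw [← Finset.sum_add_distrib]
  refine Finset.sum_congr rfl fun f _ => ?_
  rw [← Finset.sum_add_distrib]
  refine Finset.sum_congr rfl fun g _ => ?_
  simp only [Fin.consEquiv, Equiv.coe_fn_mk, ep_cons_left]
  norm_num [sub_eq_add_neg]

lemma Aw_zero_zero (h : ℤ → ℝ) : Aw 0 0 h = h 0 := by
  simp [Aw, ep]

lemma Cnt_succ_right (t m : ℕ) (j : ℤ) :
    Cnt t (m+1) j = Cnt t m (j-1) + Cnt t m (j+1) := by
  unfold Cnt
  rw [Aw_succ_right, ← Aw_add]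
  refine Finset.sum_congr rfl fun p _ => ?_
  have h1 : (ep t m p + 1 = j) ↔ (ep t m p = j - 1) := by omega
  have h2 : (ep t m p - 1 = j) ↔ (ep t m p = j + 1) := by omega
  simp only [h1, h2]

lemma Cnt_succ_left (t m : ℕ) (j : ℤ) :
    Cnt (t+1) m j = Cnt t m (j-2) + Cnt t m (j+2) := by
  unfold Cnt
  rw [Aw_succ_left, ← Aw_add]
  refine Finset.sum_congr rfl fun p _ => ?_
  have h1 : (ep t m p + 2 = j) ↔ (ep t m p = j - 2) := by omega
  have h2 : (ep t m p - 2 = j) ↔ (ep t m p = j + 2) := by omega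
  simp only [h1, h2]

lemma Cnt_zero_zero (j : ℤ) : Cnt 0 0 j = if j = 0 then 1 else 0 := by
  rw [Cnt, Aw_zero_zero]
  simp [eq_comm]

lemma Cnt_nonneg (t m : ℕ) (j : ℤ) : 0 ≤ Cnt t m j := by
  apply Finset.sum_nonneg
  intro p _
  positivity

lemma ep_not (t m : ℕ) (p : (Fin t → Bool) × (Fin m → Bool)) :
    ep t m (fun k => !p.1 k, fun k => !p.2 k) = - ep t m p := by
  unfold ep
  rw [neg_add]
  congr 1
  · rw [← Finset.sum_neg_distrib]
    refine Finset.sum_congr rfl fun k _ => ?_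
    cases hb : p.1 k <;> simp [hb]
  · rw [← Finset.sum_neg_distrib]
    refine Finset.sum_congr rfl fun k _ => ?_
    cases hb : p.2 k <;> simp [hb]

lemma Cnt_neg (t m : ℕ) (j : ℤ) : Cnt t m (-j) = Cnt t m j := by
  unfold Cnt Aw
  have inv : Function.Involutive
      (fun p : (Fin t → Bool) × (Fin m → Bool) => ((fun k => !p.1 k, fun k => !p.2 k) :
        (Fin t → Bool) × (Fin m → Bool))) := by
    intro p; simp
  rw [← Equiv.sum_comp (Function.Involutive.toPerm _ inv)
    (fun p : (Fin t → Bool) × (Fin m → Bool) => if ep t m p = -j then (1:ℝ) else 0)]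
  refine Finset.sum_congr rfl fun p _ => ?_
  have : ep t m ((Function.Involutive.toPerm _ inv) p) = - ep t m p := ep_not t m p
  rw [this]
  simp [neg_eq_iff_eq_neg, eq_comm]

/-- parity: counts vanish off the parity of `m`. -/
lemma Cnt_parity : ∀ t m : ℕ, ∀ j : ℤ, ¬ (2 ∣ (j - (m:ℤ))) → Cnt t m j = 0 := by
  intro t
  induction t with
  | zero =>
    intro m
    induction m with
    | zero =>
      intro j hj
      rw [Cnt_zero_zero, if_neg]
      omega
    | succ m ih =>
      intro j hj
      rw [Cnt_succ_right, ih _ (by push_cast at hj ⊢; omega), ih _ (by push_cast at hj ⊢; omega)]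
      ring
  | succ t ih =>
    intro m j hj
    rw [Cnt_succ_left, ih _ _ (by omega), ih _ _ (by omega)]
    ring

/-- mod-4 support for pure double walks. -/
lemma Cnt_mod4 : ∀ t : ℕ, ∀ j : ℤ, ¬ ((4:ℤ) ∣ (j - 2*t)) → Cnt t 0 j = 0 := by
  intro t
  induction t with
  | zero =>
    intro j hj
    rw [Cnt_zero_zero, if_neg]
    omega
  | succ t ih =>
    intro j hj
    push_cast at hj
    rw [Cnt_succ_left, ih _ (by omega), ih _ (by omega)]
    ring

/-- step-2 monotone for pure single walks. -/
lemma Cnt_singles_mono : ∀ m : ℕ, ∀ a : ℤ, 0 ≤ a → Cnt 0 m (a+2) ≤ Cnt 0 m a := by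
  intro m
  induction m with
  | zero =>
    intro a ha
    rw [Cnt_zero_zero, Cnt_zero_zero, if_neg (by omega)]
    split <;> norm_num
  | succ m ih =>
    intro a ha
    rw [Cnt_succ_right, Cnt_succ_right]
    have key : Cnt 0 m (a+2+1) ≤ Cnt 0 m (a-1) := by
      rcases eq_or_lt_of_le ha with h0 | h1
      · have e1 : a - 1 = -(1:ℤ) := by omega
        have e2 : a + 2 + 1 = (1:ℤ) + 2 := by omega
        rw [e1, e2, Cnt_neg]
        exact ih 1 (by norm_num)
      · have e2 : a + 2 + 1 = (a + 1) + 2 := by ring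
        have e3 : (a+1 : ℤ) = (a - 1) + 2 := by ring
        calc Cnt 0 m (a+2+1) = Cnt 0 m ((a+1)+2) := by rw [e2]
          _ ≤ Cnt 0 m (a+1) := ih _ (by omega)
          _ = Cnt 0 m ((a-1)+2) := by rw [← e3]
          _ ≤ Cnt 0 m (a-1) := ih _ (by omega)
    have key2 : Cnt 0 m (a+2-1) = Cnt 0 m (a+1) := by congr 1; ring
    rw [key2]
    linarith [key]

/-- strict inequality at the center for even pure single walks. -/
lemma Cnt_singles_strict : ∀ k : ℕ, Cnt 0 (2*k) 2 < Cnt 0 (2*k) 0 := by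
  intro k
  induction k with
  | zero =>
    norm_num [Cnt_zero_zero]
  | succ k ih =>
    have e : 2*(k+1) = (2*k + 1) + 1 := by ring
    have h0 := Cnt_succ_right 0 (2*k+1) 0
    have h2 := Cnt_succ_right 0 (2*k+1) 2
    have g1 := Cnt_succ_right 0 (2*k) 1
    have g3 := Cnt_succ_right 0 (2*k) 3
    norm_num at h0 h2 g1 g3
    have hneg : Cnt 0 (2*k+1) (-1) = Cnt 0 (2*k+1) 1 := by
      rw [show (-1:ℤ) = -(1:ℤ) by norm_num, Cnt_neg]
    have hmono : Cnt 0 (2*k) 4 ≤ Cnt 0 (2*k) 2 := by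
      have := Cnt_singles_mono (2*k) 2 (by norm_num)
      norm_num at this
      exact this
    rw [e, h0, h2, hneg, g1, g3]
    linarith

/-- step-4 monotone, for even numbers of single steps. -/
lemma Cnt_mono4 : ∀ t m : ℕ, 2 ∣ m → ∀ a : ℤ, 0 ≤ a → Cnt t m (a+4) ≤ Cnt t m a := by
  intro t
  induction t with
  | zero =>
    intro m _ a ha
    calc Cnt 0 m (a+4) = Cnt 0 m ((a+2)+2) := by congr 1; ring
      _ ≤ Cnt 0 m (a+2) := Cnt_singles_mono m (a+2) (by omega)
      _ ≤ Cnt 0 m a := Cnt_singles_mono m a ha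
  | succ t ih =>
    intro m hm a ha
    rw [Cnt_succ_left, Cnt_succ_left]
    have key : Cnt t m (a+4+2) ≤ Cnt t m (a-2) := by
      rcases Int.even_or_odd a with he | ho
      · rcases eq_or_lt_of_le ha with h0 | h1
        · have e1 : a - 2 = -(2:ℤ) := by omega
          have e2 : a + 4 + 2 = (2:ℤ) + 4 := by omega
          rw [e1, e2, Cnt_neg]
          exact ih m hm 2 (by norm_num)
        · obtain ⟨c, hc⟩ := he
          have ha2 : (2:ℤ) ≤ a := by omega
          calc Cnt t m (a+4+2) = Cnt t m ((a+2)+4) := by congr 1; ring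
            _ ≤ Cnt t m (a+2) := ih m hm (a+2) (by omega)
            _ = Cnt t m ((a-2)+4) := by congr 1; ring
            _ ≤ Cnt t m (a-2) := ih m hm (a-2) (by omega)
      · have hz : Cnt t m (a+4+2) = 0 := by
          apply Cnt_parity
          obtain ⟨c, hc⟩ := ho
          obtain ⟨d, hd⟩ := hm
          omega
        rw [hz]
        exact Cnt_nonneg t m _
    have key2 : Cnt t m (a+4-2) = Cnt t m (a+2) := by congr 1; ring
    rw [key2]
    linarith [key]

/-- main monotonicity at the center: with at least 2 singles (even count). -/
lemma Cnt_center (t n : ℕ) (hn : 2 ∣ n) : Cnt t (n+2) 2 ≤ Cnt t (n+2) 0 := by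
  have h0 := Cnt_succ_right t (n+1) 0
  have h2 := Cnt_succ_right t (n+1) 2
  have g1 := Cnt_succ_right t n 1
  have g3 := Cnt_succ_right t n 3
  norm_num at h0 h2 g1 g3
  have hneg : Cnt t (n+1) (-1) = Cnt t (n+1) 1 := by
    rw [show (-1:ℤ) = -(1:ℤ) by norm_num, Cnt_neg]
  have hm4 : Cnt t n 4 ≤ Cnt t n 0 := by
    have := Cnt_mono4 t n hn 0 le_rfl
    norm_num at this
    exact this
  rw [h0, h2, hneg, g1, g3]
  linarith

noncomputable def Nw (t m : ℕ) : ℝ := Aw t m (fun z => |(z:ℝ)|)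

lemma abs_pm_one (z : ℤ) :
    |((z:ℝ))+1| + |(z:ℝ)-1| = 2*|(z:ℝ)| + (if z = 0 then 2 else 0) := by
  rcases lt_trichotomy z 0 with h | h | h
  · have hz : (z:ℝ) ≤ -1 := by
      have hh : z ≤ -1 := by omega
      exact_mod_cast hh
    rw [if_neg (by omega), abs_of_nonpos (by linarith), abs_of_nonpos (by linarith),
      abs_of_neg (by exact_mod_cast h)]
    ring
  · subst h; norm_num
  · have hz : (1:ℝ) ≤ (z:ℝ) := by exact_mod_cast h
    rw [if_neg (by omega), abs_of_nonneg (by linarith), abs_of_nonneg (by linarith),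
      abs_of_pos (by exact_mod_cast h)]
    ring

lemma abs_pm_two (z : ℤ) :
    |((z:ℝ))+2| + |(z:ℝ)-2| = 2*|(z:ℝ)| + (if z = 0 then 4 else 0)
      + (if z = 1 then 2 else 0) + (if z = -1 then 2 else 0) := by
  rcases lt_trichotomy z (-1) with h | h | h
  · have hz : (z:ℝ) ≤ -2 := by
      have hh : z ≤ -2 := by omega
      exact_mod_cast hh
    rw [if_neg (by omega), if_neg (by omega), if_neg (by omega),
      abs_of_nonpos (by linarith), abs_of_nonpos (by linarith), abs_of_nonpos (by linarith)]
    ring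
  · subst h; norm_num
  · rcases lt_trichotomy z 1 with h2 | h2 | h2
    · have hz : z = 0 := by omega
      subst hz; norm_num
    · subst h2; norm_num
    · have hz : (2:ℝ) ≤ (z:ℝ) := by exact_mod_cast h2
      rw [if_neg (by omega), if_neg (by omega), if_neg (by omega),
        abs_of_nonneg (by linarith), abs_of_nonneg (by linarith), abs_of_nonneg (by linarith)]
      ring

lemma Nw_succ_right (t m : ℕ) : Nw t (m+1) = 2 * Nw t m + 2 * Cnt t m 0 := by
  unfold Nw
  rw [Aw_succ_right]
  have : (fun z : ℤ => |((z+1 : ℤ):ℝ)| + |((z-1 : ℤ):ℝ)|)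
      = fun z : ℤ => 2*|(z:ℝ)| + 2 * (if z = 0 then 1 else 0) := by
    funext z
    push_cast
    rw [abs_pm_one z]
    split <;> ring
  rw [this, Aw_add, Aw_mul, Aw_mul]
  rfl

lemma Nw_succ_left (t m : ℕ) (hm : 2 ∣ m) : Nw (t+1) m = 2 * Nw t m + 4 * Cnt t m 0 := by
  unfold Nw
  rw [Aw_succ_left]
  have : (fun z : ℤ => |((z+2 : ℤ):ℝ)| + |((z-2 : ℤ):ℝ)|)
      = fun z : ℤ => (2*|(z:ℝ)| + 4 * (if z = 0 then 1 else 0))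
        + (2 * (if z = 1 then 1 else 0) + 2 * (if z = -1 then 1 else 0)) := by
    funext z
    push_cast
    rw [abs_pm_two z]
    split <;> split <;> split <;> ring
  rw [this, Aw_add, Aw_add, Aw_add, Aw_mul, Aw_mul, Aw_mul, Aw_mul]
  have z1 : Cnt t m 1 = 0 := by
    apply Cnt_parity
    obtain ⟨d, hd⟩ := hm
    omega
  have z2 : Cnt t m (-1) = 0 := by
    rw [show (-1:ℤ) = -(1:ℤ) by norm_num, Cnt_neg]
    exact z1
  show 2 * Nw t m + 4 * Cnt t m 0 + (2 * Cnt t m 1 + 2 * Cnt t m (-1))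
      = 2 * Nw t m + 4 * Cnt t m 0
  rw [z1, z2]
  ring

lemma walkExp_eq (t m : ℕ) : walkExp 0 t m = Nw t m / 2^(t+m) := by
  unfold walkExp Nw Aw
  congr 1
  refine Finset.sum_congr rfl fun p _ => ?_
  congr 1
  unfold ep
  push_cast
  simp [apply_ite (fun x : ℤ => (x:ℝ))]

lemma Cnt_top (s n : ℕ) : Cnt (s+1) n 0 = 2 * Cnt s n 2 := by
  have h := Cnt_succ_left s n 0
  norm_num at h
  rw [h, show (-2:ℤ) = -(2:ℤ) by norm_num, Cnt_neg]
  ring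

lemma Cnt_expand (s n : ℕ) : Cnt s (n+2) 0 = 2 * Cnt s n 0 + 2 * Cnt s n 2 := by
  have h := Cnt_succ_right s (n+1) 0
  have g := Cnt_succ_right s n 1
  norm_num at h g
  rw [h, show (-1:ℤ) = -(1:ℤ) by norm_num, Cnt_neg, g]
  ring

lemma Cnt_key (s n : ℕ) (hn : 2 ∣ n) (h0 : n = 0 → 2 ∣ s) : Cnt s n 2 ≤ Cnt s n 0 := by
  rcases Nat.eq_zero_or_pos n with rfl | hpos
  · have : Cnt s 0 2 = 0 := by
      apply Cnt_mod4
      obtain ⟨c, hc⟩ := h0 rfl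
      omega
    rw [this]
    exact Cnt_nonneg s 0 0
  · obtain ⟨n', rfl⟩ : ∃ n', n = n' + 2 := by
      obtain ⟨d, hd⟩ := hn
      exact ⟨n - 2, by omega⟩
    exact Cnt_center s n' (by omega)

lemma delta_eq (s m : ℕ) (hm : 2 ∣ m) :
    walkExp 0 (s+1) m - walkExp 0 s (m+2) = Cnt s m 0 / 2^(s+m) := by
  rw [walkExp_eq, walkExp_eq]
  have hZ1 : Cnt s (m+1) 0 = 0 := by
    apply Cnt_parity
    obtain ⟨d, hd⟩ := hm
    omega
  have hN2 : Nw s (m+2) = 4 * Nw s m + 4 * Cnt s m 0 := by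
    rw [show m+2 = (m+1)+1 from rfl, Nw_succ_right, hZ1, Nw_succ_right]
    ring
  have hN1 : Nw (s+1) m = 2 * Nw s m + 4 * Cnt s m 0 := Nw_succ_left s m hm
  have hP : (0:ℝ) < 2^(s+m) := by positivity
  have e1 : (2:ℝ)^(s+1+m) = 2^(s+m) * 2 := by
    rw [show s+1+m = (s+m)+1 by omega, pow_succ]
  have e2 : (2:ℝ)^(s+(m+2)) = 2^(s+m) * 4 := by
    rw [show s+(m+2) = (s+m)+2 by omega, pow_add]
    norm_num
  rw [hN1, hN2, e1, e2]
  field_simp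
  ring

lemma step_le (s n : ℕ) (hn : 2 ∣ n) (h0 : n = 0 → 2 ∣ s) :
    Cnt (s+1) n 0 / 2^(s+1+n) ≤ Cnt s (n+2) 0 / 2^(s+(n+2)) := by
  have key := Cnt_key s n hn h0
  have hP : (0:ℝ) < 2^(s+n) := by positivity
  have e1 : (2:ℝ)^(s+1+n) = 2^(s+n) * 2 := by
    rw [show s+1+n = (s+n)+1 by omega, pow_succ]
  have e2 : (2:ℝ)^(s+(n+2)) = 2^(s+n) * 4 := by
    rw [show s+(n+2) = (s+n)+2 by omega, pow_add]
    norm_num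
  rw [Cnt_top, Cnt_expand, e1, e2, div_le_div_iff₀ (by positivity) (by positivity)]
  nlinarith [key, hP]

lemma step_lt (n : ℕ) (hn : 2 ∣ n) :
    Cnt 1 n 0 / 2^(1+n) < Cnt 0 (n+2) 0 / 2^(0+(n+2)) := by
  obtain ⟨k, rfl⟩ := hn
  have key : Cnt 0 (2*k) 2 < Cnt 0 (2*k) 0 := Cnt_singles_strict k
  have hP : (0:ℝ) < 2^(2*k) := by positivity
  have e1 : (2:ℝ)^(1+2*k) = 2^(2*k) * 2 := by
    rw [show 1+2*k = (2*k)+1 by omega, pow_succ]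
  have e2 : (2:ℝ)^(0+(2*k+2)) = 2^(2*k) * 4 := by
    rw [show 0+(2*k+2) = (2*k)+2 by omega, pow_add]
    norm_num
  rw [show Cnt 1 (2*k) 0 = Cnt (0+1) (2*k) 0 from rfl, Cnt_top, Cnt_expand, e1, e2,
    div_lt_div_iff₀ (by positivity) (by positivity)]
  nlinarith [key, hP]

lemma chain (r : ℕ) (h4 : 4 ∣ r) : ∀ s : ℕ, 1 ≤ s → 2*s+2 ≤ r →
    Cnt s (r-2-2*s) 0 / 2^(r-2-s) < Cnt 0 (r-2) 0 / 2^(r-2) := by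
  intro s
  induction s with
  | zero => intro h; omega
  | succ s ih =>
    intro _ hle
    rcases Nat.eq_zero_or_pos s with rfl | hs
    · have hb := step_lt (r-4) (by omega)
      rw [show 1+(r-4) = r-2-(0+1) by omega, show r-4+2 = r-2 by omega,
        show 0+(r-2) = r-2 by omega, show r-4 = r-2-2*(0+1) by omega] at hb
      exact hb
    · have hn2 : 2 ∣ (r-2-2*(s+1)) := by omega
      have h0 : (r-2-2*(s+1)) = 0 → 2 ∣ s := by omega
      have hstep := step_le s (r-2-2*(s+1)) hn2 h0
      rw [show s+1+(r-2-2*(s+1)) = r-2-(s+1) by omega,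
        show s+((r-2-2*(s+1))+2) = r-2-s by omega,
        show (r-2-2*(s+1))+2 = r-2-2*s by omega] at hstep
      exact lt_of_le_of_lt hstep (ih hs (by omega))


/-- If `4 ∣ r`, then `δx^{0}_{r,1} > δx^{0}_{r,t}` for all `2 ≤ t ≤ r/2`, where
`δx^{0}_{r,t} = x^{0}_{r,t} − x^{0}_{r,t−1}`: the marginal gain in expected distance
from the first double step strictly exceeds that of every later double step. -/
theorem walkExp_first_double_step_best (r t : ℕ) (h4 : 4 ∣ r) (ht : 2 ≤ t)
    (htr : 2 * t ≤ r) :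
    walkExp 0 t (r - 2 * t) - walkExp 0 (t - 1) (r - 2 * (t - 1)) <
      walkExp 0 1 (r - 2) - walkExp 0 0 r := by
  have h1 := delta_eq (t-1) (r-2*t) (by omega)
  rw [show t-1+1 = t by omega, show (r-2*t)+2 = r-2*(t-1) by omega] at h1
  have h2 := delta_eq 0 (r-2) (by omega)
  rw [show (0:ℕ)+1 = 1 by omega, show (r-2)+2 = r by omega,
    show (0:ℕ)+(r-2) = r-2 by omega] at h2
  rw [h1, h2]
  have hc := chain r h4 (t-1) (by omega) (by omega)
  rw [show r-2-2*(t-1) = r-2*t by omega, show r-2-(t-1) = (t-1)+(r-2*t) by omega] at hc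
  exact hc
end

section
/- Let 0 ≤ p ≤ ε ≤ 1/16 and let r ≥ 8 be an integer. Let X be a Binomial(r, p) random variable. Then the probability that X ≥ ⌈r/2⌉ is at most 2p². (This bounds the probability that a majority of r independent samples hit an event of small probability p.) -/
open Finset

/-- Let `0 ≤ p ≤ ε ≤ 1/16` and `r ≥ 8`, and let `X ~ Binomial(r, p)`. Then
`P[X ≥ ⌈r/2⌉] ≤ 2p²`: the probability that a majority of `r` independent samples hit an
event of probability `p` is at most `2p²`. (Here `⌈r/2⌉ = (r+1)/2` in `ℕ`.) -/
theorem binomial_majority_bound (r : ℕ) (hr : 8 ≤ r) (p ε : ℝ)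
    (hp : 0 ≤ p) (hpε : p ≤ ε) (hε : ε ≤ 1 / 16) :
    ∑ x ∈ Finset.Icc ((r + 1) / 2) r, (r.choose x : ℝ) * p ^ x * (1 - p) ^ (r - x) ≤
      2 * p ^ 2 := by
  set k := (r + 1) / 2 with hk
  have hk2 : 2 ≤ k := by omega
  have h4k : r + 8 ≤ 4 * k := by omega
  have hp1 : p ≤ 1 / 16 := hpε.trans hε
  have hpk : 0 ≤ p ^ k := pow_nonneg hp k
  have step1 : ∑ x ∈ Finset.Icc k r, (r.choose x : ℝ) * p ^ x * (1 - p) ^ (r - x) ≤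
      ∑ x ∈ Finset.Icc k r, (r.choose x : ℝ) * p ^ k := by
    apply Finset.sum_le_sum
    intro x hx
    obtain ⟨hx1, hx2⟩ := Finset.mem_Icc.mp hx
    have hc : (0:ℝ) ≤ (r.choose x : ℝ) := Nat.cast_nonneg _
    have h1 : (1 - p) ^ (r - x) ≤ 1 := pow_le_one₀ (by linarith) (by linarith)
    have hpx : p ^ x ≤ p ^ k := pow_le_pow_of_le_one hp (by linarith) hx1
    have hpxn : (0:ℝ) ≤ p ^ x := pow_nonneg hp x
    calc (r.choose x : ℝ) * p ^ x * (1 - p) ^ (r - x)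
        ≤ (r.choose x : ℝ) * p ^ x * 1 := by
          apply mul_le_mul_of_nonneg_left h1 (by positivity)
      _ = (r.choose x : ℝ) * p ^ x := by ring
      _ ≤ (r.choose x : ℝ) * p ^ k := mul_le_mul_of_nonneg_left hpx hc
  have hsumchoose : (∑ x ∈ Finset.Icc k r, (r.choose x : ℝ)) ≤ 2 ^ r := by
    have hnat : (∑ x ∈ Finset.Icc k r, r.choose x) ≤ 2 ^ r := by
      calc (∑ x ∈ Finset.Icc k r, r.choose x)
          ≤ ∑ x ∈ Finset.range (r + 1), r.choose x := by
            apply Finset.sum_le_sum_of_subset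
            intro x hx
            simp only [Finset.mem_Icc, Finset.mem_range] at *
            omega
        _ = 2 ^ r := Nat.sum_range_choose r
    exact_mod_cast (Nat.cast_le.mpr hnat : ((∑ x ∈ Finset.Icc k r, r.choose x : ℕ) : ℝ) ≤ _)
  have step2 : ∑ x ∈ Finset.Icc k r, (r.choose x : ℝ) * p ^ k ≤ 2 ^ r * p ^ k := by
    rw [← Finset.sum_mul]
    exact mul_le_mul_of_nonneg_right hsumchoose hpk
  have step3 : (2:ℝ) ^ r * p ^ k ≤ p ^ 2 := by
    have hsplit : p ^ k = p ^ 2 * p ^ (k - 2) := by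
      rw [← pow_add]; congr 1; omega
    have hpk2 : p ^ (k - 2) ≤ (1 / 16 : ℝ) ^ (k - 2) :=
      pow_le_pow_left₀ hp hp1 _
    have h16 : ((1:ℝ) / 16) ^ (k - 2) = 1 / 2 ^ (4 * (k - 2)) := by
      rw [div_pow, one_pow, pow_mul]; norm_num
    have h2r : (2:ℝ) ^ r ≤ 2 ^ (4 * (k - 2)) := by
      apply pow_le_pow_right₀ one_le_two; omega
    have hpos : (0:ℝ) < 2 ^ (4 * (k - 2)) := by positivity
    have h2 : (0:ℝ) ≤ p ^ 2 := sq_nonneg p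
    have key : (2:ℝ) ^ r * p ^ (k - 2) ≤ 1 := by
      calc (2:ℝ) ^ r * p ^ (k - 2) ≤ 2 ^ (4 * (k - 2)) * (1 / 2 ^ (4 * (k - 2))) := by
            apply mul_le_mul h2r (hpk2.trans_eq h16) (pow_nonneg hp _) (by positivity)
        _ = 1 := by field_simp
    calc (2:ℝ) ^ r * p ^ k = p ^ 2 * (2 ^ r * p ^ (k - 2)) := by rw [hsplit]; ring
      _ ≤ p ^ 2 * 1 := mul_le_mul_of_nonneg_left key h2
      _ = p ^ 2 := mul_one _
  nlinarith [sq_nonneg p]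
end

section
/- Fix ε with 0 < ε ≤ 1/16, an alphabet of size σ, and r = max(⌈2 ln(σ/ε²)/ε⁴⌉, 8). Let S be a multiset of n strings of length ℓ over the alphabet, and let S' be a multiset of r strings drawn independently and uniformly at random from S (with replacement). Then E[d(S, c(S'))] ≤ (1 + 2ε) · d(S, c(S)), where c(·) denotes a consensus (column-wise majority) string and d(S, x) = Σ_{s∈S} d_H(s, x). -/
set_option maxHeartbeats 1000000
set_option linter.unusedSectionVars false


open Finset

variable {α : Type*} [Fintype α] [DecidableEq α]

/-- Total Hamming distance from an indexed family of strings to a string. -/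
def famDist {ι : Type*} [Fintype ι] {ℓ : ℕ} (S : ι → Fin ℓ → α) (x : Fin ℓ → α) : ℕ :=
  ∑ j, hammingDist (S j) x

/-- `c` is a consensus string of the family `S`: at each position, `c i` is a most
frequent character of the corresponding column. -/
def IsConsensus {ι : Type*} [Fintype ι] {ℓ : ℕ} (S : ι → Fin ℓ → α)
    (c : Fin ℓ → α) : Prop :=
  ∀ i : Fin ℓ, ∀ a : α,
    (Finset.univ.filter fun j => S j i = a).card ≤
      (Finset.univ.filter fun j => S j i = c i).card


private lemma sum_prod_pow {n r : ℕ} (w : Fin n → ℝ) :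
    ∑ f : Fin r → Fin n, ∏ k, w (f k) = (∑ j, w j) ^ r := by
  rw [← Fin.prod_const r (∑ j, w j), Finset.prod_univ_sum]
  simp

private lemma card_le_sum_pow {n r : ℕ} (w : Fin n → ℝ) (hw : ∀ j, 0 ≤ w j)
    (E : Finset (Fin r → Fin n)) (hE : ∀ f ∈ E, 1 ≤ ∏ k, w (f k)) :
    (E.card : ℝ) ≤ (∑ j, w j) ^ r := by
  rw [← sum_prod_pow]
  calc (E.card : ℝ) = ∑ _f ∈ E, (1 : ℝ) := by simp
    _ ≤ ∑ f ∈ E, ∏ k, w (f k) := Finset.sum_le_sum hE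
    _ ≤ ∑ f : Fin r → Fin n, ∏ k, w (f k) :=
        Finset.sum_le_sum_of_subset_of_nonneg (Finset.subset_univ E)
          (fun f _ _ => Finset.prod_nonneg fun k _ => hw _)

private lemma prod_ite_eval {n r : ℕ} (P : Fin n → Prop) [DecidablePred P]
    (μ lam : ℝ) (f : Fin r → Fin n) :
    (∏ k, (if P (f k) then μ else lam))
      = μ ^ (Finset.univ.filter fun k => P (f k)).card
        * lam ^ (r - (Finset.univ.filter fun k => P (f k)).card) := by
  rw [Finset.prod_ite]
  simp only [Finset.prod_const]
  congr 2
  have := Finset.card_filter_add_card_filter_not (s := (Finset.univ : Finset (Fin r)))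
    (fun k => P (f k))
  simp only [Finset.card_univ, Fintype.card_fin] at this
  omega

-- disjoint filter count bound
private lemma filter_two_card_le {α : Type*} [DecidableEq α] {m : ℕ} (g : Fin m → α)
    (a cc : α) (hne : a ≠ cc) :
    (Finset.univ.filter fun k => g k = cc).card + (Finset.univ.filter fun k => g k = a).card ≤ m := by
  have hdisj : Disjoint (Finset.univ.filter fun k => g k = cc)
      (Finset.univ.filter fun k => g k = a) := by
    rw [Finset.disjoint_filter]
    intro x _ h1 h2
    exact hne (h2 ▸ h1 ▸ rfl : a = cc) |>.elim
  calc _ = ((Finset.univ.filter fun k => g k = cc) ∪ (Finset.univ.filter fun k => g k = a)).card := 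
        (Finset.card_union_of_disjoint hdisj).symm
    _ ≤ (Finset.univ : Finset (Fin m)).card := Finset.card_le_card (Finset.subset_univ _)
    _ = m := by simp

private lemma sum_two_ite {α : Type*} [DecidableEq α] {n : ℕ} (col : Fin n → α)
    (a cc : α) (hne : a ≠ cc) (t s : ℝ) :
    ∑ j : Fin n, ((if col j = cc then t else 1) * (if col j = a then s else 1))
      = n + (t - 1) * (Finset.univ.filter fun j => col j = cc).card
          + (s - 1) * (Finset.univ.filter fun j => col j = a).card := by
  have h : ∀ j : Fin n,
      ((if col j = cc then t else 1) * (if col j = a then s else 1))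
        = 1 + (t - 1) * (if col j = cc then (1:ℝ) else 0)
            + (s - 1) * (if col j = a then (1:ℝ) else 0) := by
    intro j
    by_cases h1 : col j = cc <;> by_cases h2 : col j = a
    · exact absurd (h1.symm.trans h2) (Ne.symm hne)
    · simp [h1, h2, Ne.symm hne]
    · simp [h1, h2, hne]
    · simp [h1, h2]
  rw [Finset.sum_congr rfl (fun j _ => h j)]
  rw [Finset.sum_add_distrib, Finset.sum_add_distrib, ← Finset.mul_sum, ← Finset.mul_sum,
    Finset.sum_boole, Finset.sum_boole]
  simp [Finset.card_univ]

private lemma sum_one_ite {α : Type*} [DecidableEq α] {n : ℕ} (col : Fin n → α)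
    (cc : α) (t s : ℝ) :
    ∑ j : Fin n, (if col j = cc then t else s)
      = s * ((n : ℝ) - (Finset.univ.filter fun j => col j = cc).card)
        + t * (Finset.univ.filter fun j => col j = cc).card := by
  have h : ∀ j : Fin n, (if col j = cc then t else s)
      = s + (t - s) * (if col j = cc then (1:ℝ) else 0) := by
    intro j
    by_cases h1 : col j = cc
    · simp [h1]
    · simp [h1]
  rw [Finset.sum_congr rfl (fun j _ => h j), Finset.sum_add_distrib, ← Finset.mul_sum,
    Finset.sum_boole]
  simp [Finset.card_univ]
  ring

private lemma chernoff_count {α : Type*} [DecidableEq α] {n r : ℕ} (hn : 0 < n)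
    (col : Fin n → α) (a cc : α) (hne : a ≠ cc)
    (hle : (Finset.univ.filter fun j => col j = a).card ≤ (Finset.univ.filter fun j => col j = cc).card)
    (hccpos : 0 < (Finset.univ.filter fun j => col j = cc).card) :
    (((Finset.univ : Finset (Fin r → Fin n)).filter fun f =>
        (Finset.univ.filter fun k => col (f k) = cc).card
          ≤ (Finset.univ.filter fun k => col (f k) = a).card).card : ℝ)
      ≤ (n : ℝ) ^ r * Real.exp (-(r : ℝ) *
          ((((Finset.univ.filter fun j => col j = cc).card : ℝ)
            - (Finset.univ.filter fun j => col j = a).card) / n) ^ 2 / 2) := by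
  set Na : ℕ := (Finset.univ.filter fun j => col j = a).card with hNa_def
  set Nc : ℕ := (Finset.univ.filter fun j => col j = cc).card with hNc_def
  have hNcn : Nc ≤ n := by
    calc Nc ≤ (Finset.univ : Finset (Fin n)).card := Finset.card_le_card (Finset.subset_univ _)
      _ = n := by simp
  have hsum_le : Nc + Na ≤ n := filter_two_card_le col a cc hne
  have hnpos : (0:ℝ) < n := by exact_mod_cast hn
  set δ : ℝ := (((Nc:ℝ) - Na) / n) with hδ_def
  have hδ0 : 0 ≤ δ := by
    apply div_nonneg _ hnpos.le
    have : (Na:ℝ) ≤ Nc := by exact_mod_cast hle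
    linarith
  have hδ1 : δ ≤ 1 := by
    rw [hδ_def, div_le_one hnpos]
    have h1 : (Nc:ℝ) ≤ n := by exact_mod_cast hNcn
    have h2 : (0:ℝ) ≤ Na := Nat.cast_nonneg _
    linarith
  -- the key: the count is at most (base)^r with base ≤ n * exp (-δ^2/2)
  suffices h : (((Finset.univ : Finset (Fin r → Fin n)).filter fun f =>
        (Finset.univ.filter fun k => col (f k) = cc).card
          ≤ (Finset.univ.filter fun k => col (f k) = a).card).card : ℝ)
      ≤ ((n : ℝ) * Real.exp (-δ ^ 2 / 2)) ^ r by
    calc _ ≤ ((n : ℝ) * Real.exp (-δ ^ 2 / 2)) ^ r := h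
      _ = (n : ℝ) ^ r * Real.exp (-(r : ℝ) * δ ^ 2 / 2) := by
          rw [mul_pow, ← Real.exp_nat_mul]; ring_nf
  rcases Nat.eq_zero_or_pos Na with hNa0 | hNapos
  · -- Na = 0 : no index has character a at all
    have hempty : (Finset.univ.filter fun j => col j = a) = ∅ := Finset.card_eq_zero.mp hNa0
    have hno : ∀ j, col j ≠ a := by
      intro j hj
      have : j ∈ (Finset.univ.filter fun j => col j = a) := by simp [hj]
      simp [hempty] at this
    -- event forces Ycc = 0; use weight 0 on class cc, 1 elsewhere
    have hcard := card_le_sum_pow (r := r) (fun j => if col j = cc then 0 else 1)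
      (fun j => by split <;> norm_num)
      ((Finset.univ : Finset (Fin r → Fin n)).filter fun f =>
        (Finset.univ.filter fun k => col (f k) = cc).card
          ≤ (Finset.univ.filter fun k => col (f k) = a).card)
      (by
        intro f hf
        simp only [Finset.mem_filter, Finset.mem_univ, true_and] at hf
        have hya : (Finset.univ.filter fun k => col (f k) = a).card = 0 := by
          rw [Finset.card_eq_zero, Finset.filter_eq_empty_iff]
          intro k _; exact hno (f k)
        have hyc : (Finset.univ.filter fun k => col (f k) = cc).card = 0 := by omega
        rw [prod_ite_eval (fun j => col j = cc) 0 1 f, hyc]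
        simp)
    rw [sum_one_ite col cc 0 1] at hcard
    have hbase : (1:ℝ) * ((n : ℝ) - Nc) + 0 * Nc ≤ (n : ℝ) * Real.exp (-δ ^ 2 / 2) := by
      have hδval : δ = (Nc:ℝ) / n := by rw [hδ_def, hNa0]; norm_num
      have h1 : (1:ℝ) - (Nc:ℝ)/n ≤ Real.exp (-((Nc:ℝ)/n)) := by
        have := Real.add_one_le_exp (-((Nc:ℝ)/n)); linarith
      have h2 : Real.exp (-((Nc:ℝ)/n)) ≤ Real.exp (-δ^2/2) := by
        rw [Real.exp_le_exp, hδval]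
        have hp1 : (Nc:ℝ)/n ≤ 1 := by
          rw [div_le_one hnpos]; exact_mod_cast hNcn
        have hp0 : (0:ℝ) ≤ (Nc:ℝ)/n := div_nonneg (Nat.cast_nonneg _) hnpos.le
        nlinarith
      have : (n:ℝ) - Nc = n * (1 - (Nc:ℝ)/n) := by field_simp
      rw [this]
      calc (1:ℝ) * ((n:ℝ) * (1 - (Nc:ℝ)/n)) + 0 * Nc = (n:ℝ) * (1 - (Nc:ℝ)/n) := by ring
        _ ≤ (n:ℝ) * Real.exp (-δ^2/2) := by
            apply mul_le_mul_of_nonneg_left _ hnpos.le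
            exact le_trans h1 h2
    calc _ ≤ ((1:ℝ) * ((n : ℝ) - Nc) + 0 * Nc) ^ r := hcard
      _ ≤ ((n : ℝ) * Real.exp (-δ ^ 2 / 2)) ^ r := by
          apply pow_le_pow_left₀ _ hbase
          have h1 : (Nc:ℝ) ≤ n := by exact_mod_cast hNcn
          linarith
  · -- Na > 0 : Hellinger-weight argument
    have hNcR : (0:ℝ) < Nc := by exact_mod_cast hccpos
    have hNaR : (0:ℝ) < Na := by exact_mod_cast hNapos
    set t : ℝ := Real.sqrt ((Na : ℝ) / Nc) with ht_def
    have ht0 : 0 < t := Real.sqrt_pos.mpr (div_pos hNaR hNcR)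
    have ht1 : t ≤ 1 := by
      rw [ht_def, show (1:ℝ) = Real.sqrt 1 by simp]
      apply Real.sqrt_le_sqrt
      rw [div_le_one hNcR]
      exact_mod_cast hle
    have hcard := card_le_sum_pow (r := r)
      (fun j => (if col j = cc then t else 1) * (if col j = a then 1/t else 1))
      (fun j => by
        apply mul_nonneg <;> split <;> positivity)
      ((Finset.univ : Finset (Fin r → Fin n)).filter fun f =>
        (Finset.univ.filter fun k => col (f k) = cc).card
          ≤ (Finset.univ.filter fun k => col (f k) = a).card)
      (by
        intro f hf
        simp only [Finset.mem_filter, Finset.mem_univ, true_and] at hf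
        rw [Finset.prod_mul_distrib, prod_ite_eval (fun j => col j = cc) t 1 f,
          prod_ite_eval (fun j => col j = a) (1/t) 1 f]
        simp only [one_pow, mul_one]
        rw [one_div, inv_pow, ← div_eq_mul_inv, le_div_iff₀ (pow_pos ht0 _), one_mul]
        exact pow_le_pow_of_le_one ht0.le ht1 hf)
    rw [sum_two_ite col a cc hne t (1/t)] at hcard
    set sa : ℝ := Real.sqrt Na with hsa_def
    set sc : ℝ := Real.sqrt Nc with hsc_def
    have hsa0 : 0 < sa := Real.sqrt_pos.mpr hNaR
    have hsc0 : 0 < sc := Real.sqrt_pos.mpr hNcR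
    have hsa2 : sa ^ 2 = Na := Real.sq_sqrt (Nat.cast_nonneg _)
    have hsc2 : sc ^ 2 = Nc := Real.sq_sqrt (Nat.cast_nonneg _)
    have htval : t = sa / sc := by rw [ht_def, hsa_def, hsc_def, Real.sqrt_div' _ (Nat.cast_nonneg _)]
    have hsasc : sa ≤ sc := by
      rw [hsa_def, hsc_def]
      apply Real.sqrt_le_sqrt
      exact_mod_cast hle
    have hbase_eq : (n:ℝ) + (t - 1) * Nc + (1/t - 1) * Na = n - (sc - sa)^2 := by
      rw [htval, ← hsa2, ← hsc2]
      field_simp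
      ring
    have hkey : ((Nc:ℝ) - Na)^2 ≤ (sc - sa)^2 * (2 * n) := by
      have h1 : (sc + sa)^2 ≤ 2 * ((Nc:ℝ) + Na) := by nlinarith [hsa2, hsc2, sq_nonneg (sc - sa)]
      have h2 : (Nc:ℝ) + Na ≤ n := by exact_mod_cast hsum_le
      have h3 : ((Nc:ℝ) - Na) = (sc - sa) * (sc + sa) := by nlinarith [hsa2, hsc2]
      calc ((Nc:ℝ) - Na)^2 = (sc - sa)^2 * (sc + sa)^2 := by rw [h3]; ring
        _ ≤ (sc - sa)^2 * (2 * n) := by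
            apply mul_le_mul_of_nonneg_left _ (sq_nonneg _)
            linarith
    have h5 : (n:ℝ) * δ^2 / 2 ≤ (sc - sa)^2 := by
      have hδsq : (n:ℝ) * δ^2 / 2 = ((Nc:ℝ) - Na)^2 / (2*n) := by
        rw [hδ_def]; field_simp
      rw [hδsq, div_le_iff₀ (by positivity)]
      linarith [hkey]
    have h4 : (n:ℝ) * (1 - δ^2/2) ≤ (n:ℝ) * Real.exp (-δ^2/2) := by
      apply mul_le_mul_of_nonneg_left _ hnpos.le
      have := Real.add_one_le_exp (-δ^2/2); linarith
    have hbase_le : (n:ℝ) - (sc - sa)^2 ≤ (n:ℝ) * Real.exp (-δ ^ 2 / 2) := by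
      have h6 : (n:ℝ) * (1 - δ^2/2) = n - n * δ^2 / 2 := by ring
      linarith
    have hbase_nonneg : (0:ℝ) ≤ (n:ℝ) - (sc - sa)^2 := by
      have hNcn' : (Nc:ℝ) ≤ n := by exact_mod_cast hNcn
      nlinarith [hsa0.le, hsc2]
    calc (((Finset.univ : Finset (Fin r → Fin n)).filter fun f =>
        (Finset.univ.filter fun k => col (f k) = cc).card
          ≤ (Finset.univ.filter fun k => col (f k) = a).card).card : ℝ)
        ≤ ((n:ℝ) + (t - 1) * Nc + (1/t - 1) * Na) ^ r := hcard
      _ = ((n:ℝ) - (sc - sa)^2) ^ r := by rw [hbase_eq]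
      _ ≤ ((n : ℝ) * Real.exp (-δ ^ 2 / 2)) ^ r := pow_le_pow_left₀ hbase_nonneg hbase_le r

private lemma count_half {α : Type*} [DecidableEq α] {n r : ℕ}
    (col : Fin n → α) (cc : α)
    (hNcpos : 0 < (Finset.univ.filter fun j => col j = cc).card)
    (hdpos : (Finset.univ.filter fun j => col j = cc).card < n)
    (hdle : n - (Finset.univ.filter fun j => col j = cc).card
              ≤ (Finset.univ.filter fun j => col j = cc).card) :
    (((Finset.univ : Finset (Fin r → Fin n)).filter fun f =>
        2 * (Finset.univ.filter fun k => col (f k) = cc).card ≤ r).card : ℝ)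
      ≤ (2 * Real.sqrt ((n:ℝ) - (Finset.univ.filter fun j => col j = cc).card)
            * Real.sqrt ((Finset.univ.filter fun j => col j = cc).card : ℝ)) ^ r := by
  set Nc : ℕ := (Finset.univ.filter fun j => col j = cc).card with hNc_def
  have hNcR : (0:ℝ) < Nc := by exact_mod_cast hNcpos
  have hdR : (0:ℝ) < (n:ℝ) - Nc := by
    have : (Nc:ℝ) < n := by exact_mod_cast hdpos
    linarith
  have hdleR : (n:ℝ) - Nc ≤ Nc := by
    have h1 : ((n - Nc : ℕ) : ℝ) ≤ Nc := by exact_mod_cast hdle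
    have h2 : ((n - Nc : ℕ) : ℝ) = (n:ℝ) - Nc := by
      have : Nc ≤ n := le_of_lt hdpos
      push_cast [this]; ring
    linarith
  set t : ℝ := Real.sqrt (((n:ℝ) - Nc) / Nc) with ht_def
  have ht0 : 0 < t := Real.sqrt_pos.mpr (div_pos hdR hNcR)
  have ht1 : t ≤ 1 := by
    rw [ht_def, show (1:ℝ) = Real.sqrt 1 by simp]
    apply Real.sqrt_le_sqrt
    rw [div_le_one hNcR]; exact hdleR
  have hcard := card_le_sum_pow (r := r) (fun j => if col j = cc then t else 1/t)
    (fun j => by split <;> positivity)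
    ((Finset.univ : Finset (Fin r → Fin n)).filter fun f =>
        2 * (Finset.univ.filter fun k => col (f k) = cc).card ≤ r)
    (by
      intro f hf
      simp only [Finset.mem_filter, Finset.mem_univ, true_and] at hf
      rw [prod_ite_eval (fun j => col j = cc) t (1/t) f]
      set Y : ℕ := (Finset.univ.filter fun k => col (f k) = cc).card with hY_def
      have hYr : Y ≤ r := by
        calc Y ≤ (Finset.univ : Finset (Fin r)).card := Finset.card_le_card (Finset.subset_univ _)
          _ = r := by simp
      rw [one_div, inv_pow, ← div_eq_mul_inv, le_div_iff₀ (pow_pos ht0 _), one_mul]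
      exact pow_le_pow_of_le_one ht0.le ht1 (by omega))
  rw [sum_one_ite col cc t (1/t)] at hcard
  set sd : ℝ := Real.sqrt ((n:ℝ) - Nc) with hsd_def
  set sc : ℝ := Real.sqrt (Nc : ℝ) with hsc_def
  have hsd0 : 0 < sd := Real.sqrt_pos.mpr hdR
  have hsc0 : 0 < sc := Real.sqrt_pos.mpr hNcR
  have hsd2 : sd ^ 2 = (n:ℝ) - Nc := Real.sq_sqrt hdR.le
  have hsc2 : sc ^ 2 = (Nc:ℝ) := Real.sq_sqrt (Nat.cast_nonneg _)
  have htval : t = sd / sc := by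
    rw [ht_def, hsd_def, hsc_def, Real.sqrt_div' _ (Nat.cast_nonneg _)]
  have hbase : 1/t * ((n:ℝ) - Nc) + t * Nc = 2 * sd * sc := by
    rw [htval, ← hsd2, ← hsc2]
    field_simp
    ring
  rw [hbase] at hcard
  exact hcard

private lemma g_mono (r : ℕ) (m δ : ℝ) (hm : 0 < m) (hδ : m ≤ δ) (hr1 : 1 ≤ (r:ℝ) * m^2) :
    δ * Real.exp (-(r:ℝ) * δ^2 / 2) ≤ m * Real.exp (-(r:ℝ) * m^2 / 2) := by
  have hrpos : (0:ℝ) ≤ (r:ℝ) := Nat.cast_nonneg _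
  have hstep : δ ≤ m * Real.exp ((r:ℝ) * δ^2 / 2 - (r:ℝ) * m^2 / 2) := by
    have h1 : δ / m ≤ Real.exp ((δ - m)/m) := by
      have := Real.add_one_le_exp ((δ - m)/m)
      have h2 : (δ - m)/m + 1 = δ/m := by field_simp; ring
      linarith [h2 ▸ this]
    have h3 : (δ - m)/m ≤ (r:ℝ) * δ^2 / 2 - (r:ℝ) * m^2 / 2 := by
      rw [div_le_iff₀ hm]
      have hfact : (r:ℝ) * δ^2 / 2 - (r:ℝ) * m^2 / 2 = (r:ℝ) * (δ - m) * (δ + m) / 2 := by ring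
      rw [hfact]
      have h4 : (1:ℝ) ≤ (r:ℝ) * m^2 := hr1
      nlinarith [mul_nonneg (sub_nonneg.mpr hδ) (sub_nonneg.mpr hr1),
        mul_nonneg (mul_nonneg hrpos (mul_nonneg (sub_nonneg.mpr hδ) (sub_nonneg.mpr hδ))) hm.le]
    calc δ = (δ/m) * m := by field_simp
      _ ≤ Real.exp ((δ - m)/m) * m := by
          apply mul_le_mul_of_nonneg_right h1 hm.le
      _ ≤ Real.exp ((r:ℝ) * δ^2 / 2 - (r:ℝ) * m^2 / 2) * m := by
          apply mul_le_mul_of_nonneg_right _ hm.le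
          exact Real.exp_le_exp.mpr h3
      _ = m * Real.exp ((r:ℝ) * δ^2 / 2 - (r:ℝ) * m^2 / 2) := by ring
  calc δ * Real.exp (-(r:ℝ) * δ^2 / 2)
      ≤ (m * Real.exp ((r:ℝ) * δ^2 / 2 - (r:ℝ) * m^2 / 2)) * Real.exp (-(r:ℝ) * δ^2 / 2) := by
        apply mul_le_mul_of_nonneg_right hstep (Real.exp_nonneg _)
    _ = m * Real.exp (-(r:ℝ) * m^2 / 2) := by
        rw [mul_assoc, ← Real.exp_add]; ring_nf

private lemma log_facts {σR ε : ℝ} (hσ1 : 1 ≤ σR) (hε : 0 < ε) (hε16 : ε ≤ 1/16) :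
    2.77 ≤ -Real.log ε ∧ 2 * (-Real.log ε) ≤ Real.log (σR / ε ^ 2) := by
  have hlog2 : (0.6931471803 : ℝ) < Real.log 2 := Real.log_two_gt_d9
  have hX : 2.77 ≤ -Real.log ε := by
    have h1 : Real.log ε ≤ Real.log (1/16) := Real.log_le_log hε hε16
    have h2 : Real.log (1/16 : ℝ) = - Real.log 16 := by
      rw [one_div, Real.log_inv]
    have h3 : Real.log (16:ℝ) = 4 * Real.log 2 := by
      rw [show (16:ℝ) = 2^4 by norm_num, Real.log_pow]; push_cast; ring
    rw [h2, h3] at h1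
    linarith
  refine ⟨hX, ?_⟩
  have hεsq : (0:ℝ) < ε^2 := by positivity
  rw [Real.log_div (by linarith) (ne_of_gt hεsq), Real.log_pow]
  have hσ0 : 0 ≤ Real.log σR := Real.log_nonneg hσ1
  push_cast
  linarith

private lemma numericA {σR ε : ℝ} {r : ℕ} (hσ1 : 1 ≤ σR) (hε : 0 < ε) (hε16 : ε ≤ 1/16)
    (hr8 : 8 ≤ r) (hrL : 2 * Real.log (σR / ε ^ 2) / ε ^ 4 ≤ (r:ℝ))
    (D : ℝ) (hD : 0 < D) (hD16 : D ≤ 1/16) :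
    (2 * Real.sqrt D) ^ r ≤ ε * D := by
  obtain ⟨hX, hLX⟩ := log_facts hσ1 hε hε16
  have hlog2 : (0.6931471803 : ℝ) < Real.log 2 := Real.log_two_gt_d9
  set X : ℝ := -Real.log ε with hXdef
  set L : ℝ := Real.log (σR / ε^2) with hLdef
  have hε4 : ε^4 ≤ 1/65536 := by
    calc ε^4 ≤ (1/16:ℝ)^4 := by
          apply pow_le_pow_left₀ hε.le hε16
      _ = 1/65536 := by norm_num
  have hε4pos : (0:ℝ) < ε^4 := by positivity
  -- r ≥ 262144 * X
  have hrX : 262144 * X ≤ (r:ℝ) := by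
    have h1 : 2 * (2*X) / ε^4 ≤ 2 * L / ε^4 := by
      exact (div_le_div_iff_of_pos_right hε4pos).mpr (by linarith)
    have h2 : 262144 * X ≤ 2 * (2*X) / ε^4 := by
      rw [le_div_iff₀ hε4pos]
      nlinarith [hX]
    linarith
  -- key exponent inequality
  have hexp : ((r:ℝ) - 2) * Real.log 2 ≥ X + 2 * Real.log 2 := by
    have hr4 : (0:ℝ) ≤ (r:ℝ) - 4 := by
      have : (8:ℝ) ≤ r := by exact_mod_cast hr8
      linarith
    have h1 : ((r:ℝ) - 4) * Real.log 2 ≥ ((r:ℝ) - 4) * 0.5 := by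
      apply mul_le_mul_of_nonneg_left _ hr4
      linarith
    have h2 : ((r:ℝ) - 4) * 0.5 ≥ X := by nlinarith [hX, hrX]
    nlinarith
  -- (1/2)^(r-2) ≤ ε/4
  have hhalf : (1/2 : ℝ) ^ (r - 2) ≤ ε / 4 := by
    have hh : (1/2 : ℝ) = Real.exp (-Real.log 2) := by
      rw [Real.exp_neg, Real.exp_log two_pos, one_div]
    rw [hh, ← Real.exp_nat_mul]
    rw [show (ε/4 : ℝ) = Real.exp (Real.log (ε/4)) from (Real.exp_log (by positivity)).symm]
    apply Real.exp_le_exp.mpr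
    have hcast : ((r - 2 : ℕ) : ℝ) = (r:ℝ) - 2 := by
      have : 2 ≤ r := by omega
      push_cast [this]; ring
    rw [hcast]
    have hlog4 : Real.log (ε/4) = Real.log ε - 2 * Real.log 2 := by
      rw [Real.log_div (ne_of_gt hε) (by norm_num),
        show (4:ℝ) = 2^2 by norm_num, Real.log_pow]
      push_cast; ring
    rw [hlog4]
    have : Real.log ε = -X := by rw [hXdef]; ring
    rw [this]
    linarith [hexp]
  -- assemble
  have hs : Real.sqrt D ≤ 1/4 := by
    have h1 : Real.sqrt D ≤ Real.sqrt (1/16) := Real.sqrt_le_sqrt hD16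
    rwa [show (1/16 : ℝ) = (1/4)^2 by norm_num, Real.sqrt_sq (by norm_num)] at h1
  have h2s0 : (0:ℝ) ≤ 2 * Real.sqrt D := by positivity
  have h2s : 2 * Real.sqrt D ≤ 1/2 := by linarith
  have hsq : (2 * Real.sqrt D)^2 = 4 * D := by
    rw [mul_pow, Real.sq_sqrt hD.le]; ring
  calc (2 * Real.sqrt D) ^ r = (2 * Real.sqrt D) ^ (r - 2) * (2 * Real.sqrt D) ^ 2 := by
        rw [← pow_add]; congr 1; omega
    _ ≤ (1/2 : ℝ) ^ (r - 2) * (4 * D) := by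
        rw [hsq]
        apply mul_le_mul_of_nonneg_right _ (by positivity)
        exact pow_le_pow_left₀ h2s0 h2s _
    _ ≤ (ε / 4) * (4 * D) := by
        apply mul_le_mul_of_nonneg_right hhalf (by positivity)
    _ = ε * D := by ring

private lemma numericB {σR ε : ℝ} {r : ℕ} (hσ1 : 1 ≤ σR) (hε : 0 < ε) (hε16 : ε ≤ 1/16)
    (hrL : 2 * Real.log (σR / ε ^ 2) / ε ^ 4 ≤ (r:ℝ))
    (D : ℝ) (hD : 1/16 < D) :
    1 ≤ (r:ℝ) * (ε * D)^2 ∧ Real.exp (-(r:ℝ) * (ε * D)^2 / 2) ≤ ε^2 / σR := by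
  obtain ⟨hX, hLX⟩ := log_facts hσ1 hε hε16
  set X : ℝ := -Real.log ε with hXdef
  set L : ℝ := Real.log (σR / ε^2) with hLdef
  have hLpos : (0:ℝ) < L := by linarith
  have hε4pos : (0:ℝ) < ε^4 := by positivity
  have hDε : ε ≤ D := by linarith
  have hrm : 2 * L ≤ (r:ℝ) * (ε * D)^2 := by
    have hm2 : (0:ℝ) ≤ (ε*D)^2 := sq_nonneg _
    have h1 : (2 * L / ε^4) * (ε*D)^2 ≤ (r:ℝ) * (ε*D)^2 :=
      mul_le_mul_of_nonneg_right hrL hm2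
    have h2 : (2 * L / ε^4) * (ε*D)^2 = 2 * L * (D^2/ε^2) := by
      field_simp
    have h3 : (1:ℝ) ≤ D^2/ε^2 := by
      rw [le_div_iff₀ (by positivity)]
      nlinarith
    nlinarith [h1, h2 ▸ h1]
  constructor
  · linarith
  · have h4 : L ≤ (r:ℝ) * (ε*D)^2 / 2 := by linarith
    have h5 : Real.exp (-(r:ℝ) * (ε * D)^2 / 2) ≤ Real.exp (-L) := by
      apply Real.exp_le_exp.mpr
      linarith
    have h6 : Real.exp (-L) = ε^2/σR := by
      rw [hLdef, Real.exp_neg, Real.exp_log (by positivity), inv_div]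
    linarith [h6 ▸ h5]

private lemma column_main {α : Type*} [Fintype α] [DecidableEq α] {n r : ℕ} (hn : 0 < n)
    (ε : ℝ) (hε : 0 < ε) (hε16 : ε ≤ 1/16) (hr8 : 8 ≤ r)
    (hrL : 2 * Real.log ((Fintype.card α : ℝ) / ε ^ 2) / ε ^ 4 ≤ (r:ℝ))
    (col : Fin n → α) (cc : α)
    (hcc : ∀ a : α, (Finset.univ.filter fun j => col j = a).card
        ≤ (Finset.univ.filter fun j => col j = cc).card)
    (choice : (Fin r → Fin n) → α)
    (hchoice : ∀ (f : Fin r → Fin n) (a : α),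
        (Finset.univ.filter fun k => col (f k) = a).card
          ≤ (Finset.univ.filter fun k => col (f k) = choice f).card) :
    ∑ f : Fin r → Fin n,
        (((Finset.univ.filter fun j => col j = cc).card : ℝ)
          - ((Finset.univ.filter fun j => col j = choice f).card : ℝ))
      ≤ 2 * ε * ((n:ℝ) - (Finset.univ.filter fun j => col j = cc).card) * (n:ℝ) ^ r := by
  classical
  have hα : Nonempty α := ⟨col ⟨0, hn⟩⟩
  have hσ1 : (1:ℝ) ≤ (Fintype.card α : ℝ) := by
    have := Fintype.card_pos_iff.mpr hα
    exact_mod_cast this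
  have hrpos : 0 < r := by omega
  set N : α → ℕ := fun a => (Finset.univ.filter fun j => col j = a).card with hN
  set Y : (Fin r → Fin n) → α → ℕ :=
    fun f a => (Finset.univ.filter fun k => col (f k) = a).card with hY
  have hNle : ∀ a, N a ≤ n := by
    intro a
    calc N a ≤ (Finset.univ : Finset (Fin n)).card := Finset.card_le_card (Finset.subset_univ _)
      _ = n := by simp
  have hYle : ∀ f a, Y f a ≤ r := by
    intro f a
    calc Y f a ≤ (Finset.univ : Finset (Fin r)).card := Finset.card_le_card (Finset.subset_univ _)
      _ = r := by simp
  have hNc1 : 1 ≤ N cc := by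
    have h0 : (⟨0, hn⟩ : Fin n) ∈ Finset.univ.filter fun j => col j = col ⟨0, hn⟩ := by simp
    have h1 : 1 ≤ N (col ⟨0, hn⟩) := Finset.card_pos.mpr ⟨_, h0⟩
    exact le_trans h1 (hcc _)
  have hnpos : (0:ℝ) < n := by exact_mod_cast hn
  rcases eq_or_lt_of_le (hNle cc) with hd0 | hdpos
  · -- d = 0 : every character is cc, choice is always cc
    have hall : ∀ j, col j = cc := by
      intro j
      have huniv : (Finset.univ.filter fun j => col j = cc) = Finset.univ := by
        apply Finset.eq_univ_of_card
        show N cc = _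
        simp [hd0]
      have hmem : j ∈ Finset.univ.filter fun j => col j = cc := by
        rw [huniv]; exact Finset.mem_univ j
      exact (Finset.mem_filter.mp hmem).2
    have hchoice_cc : ∀ f : Fin r → Fin n, choice f = cc := by
      intro f
      have hYcc : Y f cc = r := by
        rw [hY]
        simp only
        rw [Finset.filter_true_of_mem (fun k _ => hall (f k))]
        simp
      have hYch : Y f (choice f) = r := le_antisymm (hYle f _) (hYcc ▸ hchoice f cc)
      have huniv : (Finset.univ.filter fun k => col (f k) = choice f) = Finset.univ :=
        Finset.eq_univ_of_card _ (by show Y f (choice f) = _; simp [hYch])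
      have hk : (⟨0, hrpos⟩ : Fin r) ∈ Finset.univ.filter fun k => col (f k) = choice f := by
        rw [huniv]; exact Finset.mem_univ _
      have := (Finset.mem_filter.mp hk).2
      rw [hall (f ⟨0, hrpos⟩)] at this
      exact this.symm
    have hzero : ∀ f : Fin r → Fin n, ((N cc : ℝ) - (N (choice f) : ℝ)) = 0 := by
      intro f; rw [hchoice_cc f]; ring
    rw [Finset.sum_congr rfl (fun f _ => hzero f)]
    have : ((N cc : ℝ)) = n := by exact_mod_cast hd0
    rw [Finset.sum_const]
    simp [this]
    rw [show ((Finset.univ.filter fun j => col j = cc).card : ℝ) = n from this]; simp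
  · -- d > 0
    set dR : ℝ := (n:ℝ) - N cc with hdR
    have hdRpos : 0 < dR := by
      have : (N cc : ℝ) < n := by exact_mod_cast hdpos
      rw [hdR]; linarith
    set D : ℝ := dR / n with hD
    have hDpos : 0 < D := div_pos hdRpos hnpos
    have hD1 : D ≤ 1 := by
      rw [hD, div_le_one hnpos]
      have : (0:ℝ) ≤ N cc := Nat.cast_nonneg _
      rw [hdR]; linarith
    -- fiberwise decomposition
    have hfib : ∑ f : Fin r → Fin n, ((N cc : ℝ) - (N (choice f) : ℝ))
        = ∑ a : α, ((N cc : ℝ) - (N a : ℝ))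
            * ((Finset.univ.filter fun f : Fin r → Fin n => choice f = a).card : ℝ) := by
      rw [← Finset.sum_fiberwise_of_maps_to (g := choice)
        (fun f _ => Finset.mem_univ (choice f)) (fun f => ((N cc : ℝ) - (N (choice f) : ℝ)))]
      apply Finset.sum_congr rfl
      intro a _
      rw [Finset.sum_congr rfl (fun f hf => by
        rw [(Finset.mem_filter.mp hf).2]), Finset.sum_const]
      simp [mul_comm]
    rw [hfib]
    -- split into good and bad characters
    rw [← Finset.sum_filter_add_sum_filter_not Finset.univ (fun a => ε * dR < (N cc : ℝ) - N a)]
    set B : Finset α := Finset.univ.filter fun a => ε * dR < (N cc : ℝ) - N a with hB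
    have hfib_card : ∑ a : α, ((Finset.univ.filter fun f : Fin r → Fin n => choice f = a).card)
        = n ^ r := by
      rw [← Finset.card_eq_sum_card_fiberwise (f := choice) (t := Finset.univ)
        (fun f _ => Finset.mem_univ _)]
      simp [Finset.card_univ]
    -- good part
    have hgood : ∑ a ∈ Finset.univ.filter (fun a => ¬ (ε * dR < (N cc : ℝ) - N a)),
        ((N cc : ℝ) - (N a : ℝ))
          * ((Finset.univ.filter fun f : Fin r → Fin n => choice f = a).card : ℝ)
        ≤ ε * dR * (n:ℝ) ^ r := by
      calc ∑ a ∈ Finset.univ.filter (fun a => ¬ (ε * dR < (N cc : ℝ) - N a)),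
            ((N cc : ℝ) - (N a : ℝ))
              * ((Finset.univ.filter fun f : Fin r → Fin n => choice f = a).card : ℝ)
          ≤ ∑ a ∈ Finset.univ.filter (fun a => ¬ (ε * dR < (N cc : ℝ) - N a)),
            (ε * dR) * ((Finset.univ.filter fun f : Fin r → Fin n => choice f = a).card : ℝ) := by
            apply Finset.sum_le_sum
            intro a ha
            apply mul_le_mul_of_nonneg_right _ (Nat.cast_nonneg _)
            exact le_of_not_gt (Finset.mem_filter.mp ha).2
        _ ≤ ∑ a : α, (ε * dR) * ((Finset.univ.filter fun f : Fin r → Fin n => choice f = a).card : ℝ) := by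
            apply Finset.sum_le_sum_of_subset_of_nonneg (Finset.filter_subset _ _)
            intro a _ _
            have : (0:ℝ) ≤ ε * dR := by positivity
            positivity
        _ = ε * dR * (n:ℝ)^r := by
            rw [← Finset.mul_sum]
            congr 1
            rw [← Nat.cast_sum]
            rw [hfib_card]
            push_cast
            ring
    -- bad part
    have hbad : ∑ a ∈ B, ((N cc : ℝ) - (N a : ℝ))
          * ((Finset.univ.filter fun f : Fin r → Fin n => choice f = a).card : ℝ)
        ≤ ε * dR * (n:ℝ) ^ r := by
      have haB : ∀ a ∈ B, a ≠ cc := by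
        intro a ha hacc
        have h1 := (Finset.mem_filter.mp ha).2
        rw [hacc] at h1
        have : (0:ℝ) < ε * dR := by positivity
        simp at h1
        linarith
      have hsubA : ∀ a ∈ B, (Finset.univ.filter fun f : Fin r → Fin n => choice f = a)
          ⊆ (Finset.univ.filter fun f : Fin r → Fin n => Y f cc ≤ Y f a) := by
        intro a _ f hf
        have h1 := (Finset.mem_filter.mp hf).2
        simp only [Finset.mem_filter, Finset.mem_univ, true_and]
        have h2 := hchoice f cc
        rw [h1] at h2
        exact h2
      by_cases hreg : 16 * (n - N cc) ≤ n
      · -- Regime A : D ≤ 1/16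
        have hdcast : ((n - N cc : ℕ) : ℝ) = dR := by
          rw [hdR]; push_cast [hNle cc]; ring
        have hD16 : D ≤ 1/16 := by
          have h1 : (16:ℝ) * dR ≤ n := by
            rw [← hdcast]
            exact_mod_cast hreg
          rw [hD, div_le_div_iff₀ hnpos (by norm_num : (0:ℝ) < 16)]
          linarith
        set eventC : Finset (Fin r → Fin n) :=
          (Finset.univ : Finset (Fin r → Fin n)).filter (fun f => 2 * Y f cc ≤ r) with hEC
        have hsubC : ∀ a ∈ B, (Finset.univ.filter fun f : Fin r → Fin n => choice f = a)
            ⊆ eventC := by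
          intro a ha f hf
          have h1 : Y f cc ≤ Y f a := (Finset.mem_filter.mp (hsubA a ha hf)).2
          have h2 : Y f cc + Y f a ≤ r := filter_two_card_le (fun k => col (f k)) a cc (haB a ha)
          simp only [hEC, Finset.mem_filter, Finset.mem_univ, true_and]
          omega
        have hdisj : ∀ x ∈ B, ∀ y ∈ B, x ≠ y →
            Disjoint (Finset.univ.filter fun f : Fin r → Fin n => choice f = x)
              (Finset.univ.filter fun f : Fin r → Fin n => choice f = y) := by
          intro x _ y _ hxy
          rw [Finset.disjoint_filter]
          intro f _ h1 h2
          exact hxy (h1 ▸ h2 ▸ rfl)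
        have hsum_card : ∑ a ∈ B, ((Finset.univ.filter fun f : Fin r → Fin n => choice f = a).card)
            ≤ eventC.card := by
          rw [← Finset.card_biUnion hdisj]
          apply Finset.card_le_card
          exact Finset.biUnion_subset.mpr hsubC
        have hhalf : (eventC.card : ℝ)
            ≤ (2 * Real.sqrt ((n:ℝ) - N cc) * Real.sqrt ((N cc : ℝ))) ^ r := by
          apply count_half col cc hNc1 hdpos
          show n - N cc ≤ N cc
          have := hNle cc
          omega
        have hNcc_n : Real.sqrt ((N cc : ℝ)) ≤ Real.sqrt (n:ℝ) := by
          apply Real.sqrt_le_sqrt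
          exact_mod_cast hNle cc
        have hdRD : Real.sqrt dR = Real.sqrt D * Real.sqrt (n:ℝ) := by
          rw [← Real.sqrt_mul hDpos.le]
          congr 1
          rw [hD]
          field_simp
        have hbb : 2 * Real.sqrt ((n:ℝ) - N cc) * Real.sqrt ((N cc : ℝ))
            ≤ (n:ℝ) * (2 * Real.sqrt D) := by
          have h1 : Real.sqrt ((n:ℝ) - N cc) = Real.sqrt dR := by rw [hdR]
          rw [h1, hdRD]
          have h2 : (0:ℝ) ≤ 2 * (Real.sqrt D * Real.sqrt (n:ℝ)) := by positivity
          calc 2 * (Real.sqrt D * Real.sqrt (n:ℝ)) * Real.sqrt ((N cc : ℝ))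
              ≤ 2 * (Real.sqrt D * Real.sqrt (n:ℝ)) * Real.sqrt (n:ℝ) :=
                mul_le_mul_of_nonneg_left hNcc_n h2
            _ = (Real.sqrt (n:ℝ) * Real.sqrt (n:ℝ)) * (2 * Real.sqrt D) := by ring
            _ = (n:ℝ) * (2 * Real.sqrt D) := by
                rw [Real.mul_self_sqrt hnpos.le]
        have hApow : ((2 * Real.sqrt ((n:ℝ) - N cc) * Real.sqrt ((N cc : ℝ))) ^ r : ℝ)
            ≤ (n:ℝ)^r * (ε * D) := by
          calc (2 * Real.sqrt ((n:ℝ) - N cc) * Real.sqrt ((N cc : ℝ))) ^ r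
              ≤ ((n:ℝ) * (2 * Real.sqrt D)) ^ r := by
                apply pow_le_pow_left₀ (by positivity) hbb
            _ = (n:ℝ)^r * (2 * Real.sqrt D)^r := by rw [mul_pow]
            _ ≤ (n:ℝ)^r * (ε * D) := by
                apply mul_le_mul_of_nonneg_left _ (by positivity)
                exact numericA hσ1 hε hε16 hr8 hrL D hDpos hD16
        calc ∑ a ∈ B, ((N cc : ℝ) - (N a : ℝ))
              * ((Finset.univ.filter fun f : Fin r → Fin n => choice f = a).card : ℝ)
            ≤ ∑ a ∈ B, (n:ℝ)
              * ((Finset.univ.filter fun f : Fin r → Fin n => choice f = a).card : ℝ) := by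
              apply Finset.sum_le_sum
              intro a _
              apply mul_le_mul_of_nonneg_right _ (Nat.cast_nonneg _)
              have h1 : (0:ℝ) ≤ N a := Nat.cast_nonneg _
              have h2 : (N cc : ℝ) ≤ n := by exact_mod_cast hNle cc
              linarith
          _ = (n:ℝ) * ∑ a ∈ B, ((Finset.univ.filter fun f : Fin r → Fin n => choice f = a).card : ℝ) := by
              rw [Finset.mul_sum]
          _ ≤ (n:ℝ) * (eventC.card : ℝ) := by
              apply mul_le_mul_of_nonneg_left _ hnpos.le
              rw [← Nat.cast_sum]
              exact_mod_cast hsum_card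
          _ ≤ (n:ℝ) * ((n:ℝ)^r * (ε * D)) := by
              apply mul_le_mul_of_nonneg_left (le_trans hhalf hApow) hnpos.le
          _ = ε * dR * (n:ℝ)^r := by
              rw [hD]
              field_simp
      · -- Regime B : D > 1/16
        have hdcast : ((n - N cc : ℕ) : ℝ) = dR := by
          rw [hdR]; push_cast [hNle cc]; ring
        have hD16 : 1/16 < D := by
          have h1 : (n:ℝ) < 16 * dR := by
            rw [← hdcast]
            exact_mod_cast (by omega : n < 16 * (n - N cc))
          rw [hD, div_lt_div_iff₀ (by norm_num : (0:ℝ) < 16) hnpos] at *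
          linarith
        obtain ⟨hm1, hm2⟩ := numericB hσ1 hε hε16 hrL D hD16
        have hmpos : (0:ℝ) < ε * D := by positivity
        have hterm : ∀ a ∈ B, ((N cc : ℝ) - (N a : ℝ))
            * ((Finset.univ.filter fun f : Fin r → Fin n => choice f = a).card : ℝ)
            ≤ (n:ℝ)^(r+1) * ((ε * D) * (ε^2 / (Fintype.card α : ℝ))) := by
          intro a ha
          set δa : ℝ := ((N cc : ℝ) - (N a : ℝ)) / n with hδa
          have hmδ : ε * D ≤ δa := by
            have h1 : ε * dR < (N cc : ℝ) - N a := (Finset.mem_filter.mp ha).2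
            rw [hδa, hD, le_div_iff₀ hnpos]
            calc ε * (dR/n) * n = ε * dR := by field_simp
              _ ≤ (N cc : ℝ) - N a := le_of_lt h1
          have hδpos : 0 < δa := lt_of_lt_of_le hmpos hmδ
          have hchern := chernoff_count (r := r) hn col a cc (haB a ha) (hcc a) hNc1
          have hcard_mono : ((Finset.univ.filter fun f : Fin r → Fin n => choice f = a).card : ℝ)
              ≤ ((Finset.univ.filter fun f : Fin r → Fin n => Y f cc ≤ Y f a).card : ℝ) := by
            exact_mod_cast Finset.card_le_card (hsubA a ha)
          have hgm : δa * Real.exp (-(r:ℝ) * δa^2 / 2)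
              ≤ (ε * D) * Real.exp (-(r:ℝ) * (ε * D)^2 / 2) := g_mono r (ε*D) δa hmpos hmδ hm1
          have hNccNa : ((N cc : ℝ) - (N a : ℝ)) = (n:ℝ) * δa := by
            rw [hδa]; field_simp
          calc ((N cc : ℝ) - (N a : ℝ))
              * ((Finset.univ.filter fun f : Fin r → Fin n => choice f = a).card : ℝ)
              ≤ ((N cc : ℝ) - (N a : ℝ))
                * ((Finset.univ.filter fun f : Fin r → Fin n => Y f cc ≤ Y f a).card : ℝ) := by
                apply mul_le_mul_of_nonneg_left hcard_mono
                rw [hNccNa]; positivity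
            _ ≤ ((n:ℝ) * δa) * ((n:ℝ)^r * Real.exp (-(r:ℝ) * δa^2 / 2)) := by
                rw [hNccNa]
                apply mul_le_mul_of_nonneg_left _ (by positivity)
                exact hchern
            _ = (n:ℝ)^(r+1) * (δa * Real.exp (-(r:ℝ) * δa^2 / 2)) := by ring
            _ ≤ (n:ℝ)^(r+1) * ((ε * D) * Real.exp (-(r:ℝ) * (ε * D)^2 / 2)) := by
                apply mul_le_mul_of_nonneg_left hgm (by positivity)
            _ ≤ (n:ℝ)^(r+1) * ((ε * D) * (ε^2 / (Fintype.card α : ℝ))) := by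
                apply mul_le_mul_of_nonneg_left _ (by positivity)
                apply mul_le_mul_of_nonneg_left hm2 hmpos.le
        calc ∑ a ∈ B, ((N cc : ℝ) - (N a : ℝ))
              * ((Finset.univ.filter fun f : Fin r → Fin n => choice f = a).card : ℝ)
            ≤ B.card • ((n:ℝ)^(r+1) * ((ε * D) * (ε^2 / (Fintype.card α : ℝ)))) :=
              Finset.sum_le_card_nsmul B _ _ hterm
          _ = (B.card : ℝ) * ((n:ℝ)^(r+1) * ((ε * D) * (ε^2 / (Fintype.card α : ℝ)))) := by
              rw [nsmul_eq_mul]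
          _ ≤ (Fintype.card α : ℝ) * ((n:ℝ)^(r+1) * ((ε * D) * (ε^2 / (Fintype.card α : ℝ)))) := by
              apply mul_le_mul_of_nonneg_right _ (by positivity)
              exact_mod_cast Finset.card_le_univ B
          _ = (n:ℝ)^(r+1) * (ε * D) * ε^2 := by
              field_simp
          _ ≤ (n:ℝ)^(r+1) * (ε * D) * 1 := by
              apply mul_le_mul_of_nonneg_left _ (by positivity)
              nlinarith
          _ = ε * dR * (n:ℝ)^r := by
              rw [hD, pow_succ]
              field_simp
    have hfinal : 2 * ε * ((n:ℝ) - (N cc:ℝ)) * (n:ℝ)^r = ε * dR * (n:ℝ)^r + ε * dR * (n:ℝ)^r := by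
      rw [hdR]; ring
    rw [hfinal]
    exact add_le_add hbad hgood

private lemma famDist_eq {n ℓ : ℕ} (S : Fin n → Fin ℓ → α) (x : Fin ℓ → α) :
    (famDist S x : ℝ) = ∑ i : Fin ℓ,
      ((n:ℝ) - ((Finset.univ.filter fun j => S j i = x i).card : ℝ)) := by
  have h1 : ∀ j, (hammingDist (S j) x : ℝ) = ∑ i, if S j i = x i then (0:ℝ) else 1 := by
    intro j
    rw [hammingDist]
    rw [← Finset.sum_boole]
    apply Finset.sum_congr rfl
    intro i _
    by_cases h : S j i = x i <;> simp [h]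
  rw [famDist]
  push_cast
  rw [Finset.sum_congr rfl (fun j _ => h1 j), Finset.sum_comm]
  apply Finset.sum_congr rfl
  intro i _
  have h2 : ∀ j : Fin n, (if S j i = x i then (0:ℝ) else 1)
      = 1 - (if S j i = x i then (1:ℝ) else 0) := by
    intro j; by_cases h : S j i = x i <;> simp [h]
  rw [Finset.sum_congr rfl (fun j _ => h2 j), Finset.sum_sub_distrib, Finset.sum_boole,
    Finset.sum_const]
  simp [Finset.card_univ]

/-- Sampling lemma: with `0 < ε ≤ 1/16`, alphabet size `σ`, and
`r = max(⌈2 ln(σ/ε²)/ε⁴⌉, 8)`, if `S'` consists of `r` strings drawn independently and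
uniformly at random (with replacement) from the `n` strings of `S`, then
`E[d(S, c(S'))] ≤ (1 + 2ε) · d(S, c(S))`.  The expectation is written as an average over
all `n^r` possible samples `f : Fin r → Fin n`. -/
theorem sampling_consensus_expectation (σ n ℓ r : ℕ) (hn : 0 < n) (ε : ℝ)
    (hε : 0 < ε) (hε16 : ε ≤ 1 / 16) (hσ : Fintype.card α = σ)
    (hr : r = max ⌈2 * Real.log ((σ : ℝ) / ε ^ 2) / ε ^ 4⌉₊ 8)
    (S : Fin n → Fin ℓ → α) (c : Fin ℓ → α) (hc : IsConsensus S c)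
    (cons : (Fin r → Fin n) → Fin ℓ → α)
    (hcons : ∀ f : Fin r → Fin n, IsConsensus (S ∘ f) (cons f)) :
    (∑ f : Fin r → Fin n, (famDist S (cons f) : ℝ)) / (n : ℝ) ^ r ≤
      (1 + 2 * ε) * (famDist S c : ℝ) := by
  have hr8 : 8 ≤ r := hr ▸ le_max_right _ _
  have hrL : 2 * Real.log ((Fintype.card α : ℝ) / ε ^ 2) / ε ^ 4 ≤ (r:ℝ) := by
    rw [hσ]
    calc 2 * Real.log ((σ:ℝ) / ε ^ 2) / ε ^ 4
        ≤ (⌈2 * Real.log ((σ:ℝ) / ε ^ 2) / ε ^ 4⌉₊ : ℝ) := Nat.le_ceil _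
      _ ≤ (r:ℝ) := by
          rw [hr]
          exact_mod_cast Nat.cast_le.mpr (le_max_left _ _)
  have hnr_pos : (0:ℝ) < (n:ℝ)^r := by
    have : (0:ℝ) < n := by exact_mod_cast hn
    positivity
  rw [div_le_iff₀ hnr_pos]
  have hcardfun : ((Finset.univ : Finset (Fin r → Fin n)).card : ℝ) = (n:ℝ)^r := by
    rw [Finset.card_univ, Fintype.card_fun]
    simp
  calc ∑ f : Fin r → Fin n, (famDist S (cons f) : ℝ)
      = ∑ i : Fin ℓ, ∑ f : Fin r → Fin n,
          ((n:ℝ) - ((Finset.univ.filter fun j => S j i = cons f i).card : ℝ)) := by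
        rw [Finset.sum_congr rfl (fun f _ => famDist_eq S (cons f)), Finset.sum_comm]
    _ ≤ ∑ i : Fin ℓ, (1 + 2*ε) * ((n:ℝ) - ((Finset.univ.filter fun j => S j i = c i).card : ℝ)) * (n:ℝ)^r := by
        apply Finset.sum_le_sum
        intro i _
        have hcol := column_main (α := α) (r := r) hn ε hε hε16 hr8 hrL
          (fun j => S j i) (c i) (fun a => hc i a)
          (fun f => cons f i) (fun f a => hcons f i a)
        have hsplit : ∑ f : Fin r → Fin n,
            ((n:ℝ) - ((Finset.univ.filter fun j => S j i = cons f i).card : ℝ))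
            = ((n:ℝ) - ((Finset.univ.filter fun j => S j i = c i).card : ℝ)) * (n:ℝ)^r
              + ∑ f : Fin r → Fin n,
                (((Finset.univ.filter fun j => S j i = c i).card : ℝ)
                  - ((Finset.univ.filter fun j => S j i = cons f i).card : ℝ)) := by
          rw [show ((n:ℝ) - ((Finset.univ.filter fun j => S j i = c i).card : ℝ)) * (n:ℝ)^r
              = ∑ _f : Fin r → Fin n, ((n:ℝ) - ((Finset.univ.filter fun j => S j i = c i).card : ℝ))
            from by rw [Finset.sum_const, nsmul_eq_mul, ← hcardfun]; ring]
          rw [← Finset.sum_add_distrib]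
          apply Finset.sum_congr rfl
          intro f _
          ring
        rw [hsplit]
        have hexp : (1 + 2*ε) * ((n:ℝ) - ((Finset.univ.filter fun j => S j i = c i).card : ℝ)) * (n:ℝ)^r
            = ((n:ℝ) - ((Finset.univ.filter fun j => S j i = c i).card : ℝ)) * (n:ℝ)^r
              + 2*ε * ((n:ℝ) - ((Finset.univ.filter fun j => S j i = c i).card : ℝ)) * (n:ℝ)^r := by
          ring
        rw [hexp]
        exact add_le_add (le_refl _) hcol
    _ = (1 + 2 * ε) * (famDist S c : ℝ) * (n:ℝ)^r := by
        rw [famDist_eq S c, Finset.mul_sum, Finset.sum_mul]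
end

section
/- Let 0 < ε ≤ 1/2, let d ≥ 0, and let S_x be a set of n* strings with a string x satisfying d(S_x, x) ≤ (1+ε) d. Let S'' be obtained from S_x by removing the ⌈ε n*⌉ strings farthest from x. Then d(S'', c(S'')) ≤ d(S'', x) ≤ (1−ε)(1+ε) d ≤ d; in particular S'' is feasible for the distance bound d. Moreover |S''| ≥ n*(1 − ε) − 1. -/
open Finset

variable {ℓ : ℕ} {α : Type*} [Fintype α] [DecidableEq α]

/-- Total Hamming distance from a finite set of strings to a string. -/
def setDist (T : Finset (Fin ℓ → α)) (x : Fin ℓ → α) : ℕ :=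
  ∑ s ∈ T, hammingDist s x

/-- Let `0 < ε ≤ 1/2`, `d ≥ 0`, and let `Sx` be `n*` strings with a center `x` satisfying
`d(Sx, x) ≤ (1+ε) d`.  Let `S''` be obtained from `Sx` by removing the `⌈ε n*⌉` strings
farthest from `x`.  Then `d(S'', c(S'')) ≤ d(S'', x) ≤ (1−ε)(1+ε) d ≤ d`, and
`|S''| ≥ n*(1 − ε) − 1`.  Here `cS T` denotes a consensus string of `T`, i.e. a minimizer
of `d(T, ·)`. -/
theorem removing_farthest_strings_feasible (Sx S'' : Finset (Fin ℓ → α)) (nstar : ℕ)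
    (ε d : ℝ) (hε0 : 0 < ε) (hε : ε ≤ 1 / 2) (hd : 0 ≤ d) (x : Fin ℓ → α)
    (cS : Finset (Fin ℓ → α) → Fin ℓ → α)
    (hcS : ∀ T : Finset (Fin ℓ → α), ∀ y : Fin ℓ → α, setDist T (cS T) ≤ setDist T y)
    (hcard : Sx.card = nstar) (hx : (setDist Sx x : ℝ) ≤ (1 + ε) * d)
    (hsub : S'' ⊆ Sx) (hcard'' : S''.card = nstar - ⌈ε * nstar⌉₊)
    (hfar : ∀ s ∈ S'', ∀ t ∈ Sx \ S'', hammingDist s x ≤ hammingDist t x) :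
    (setDist S'' (cS S'') : ℝ) ≤ (setDist S'' x : ℝ) ∧
      (setDist S'' x : ℝ) ≤ (1 - ε) * (1 + ε) * d ∧
      (1 - ε) * (1 + ε) * d ≤ d ∧
      (nstar : ℝ) * (1 - ε) - 1 ≤ (S''.card : ℝ) := by
  have hε1 : ε ≤ 1 := hε.trans (by norm_num)
  have hcle : ⌈ε * nstar⌉₊ ≤ nstar := by
    rw [Nat.ceil_le]
    nlinarith [Nat.cast_nonneg (α := ℝ) nstar]
  have hceil : ε * nstar ≤ (⌈ε * nstar⌉₊ : ℝ) := Nat.le_ceil _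
  have hceil1 : (⌈ε * nstar⌉₊ : ℝ) < ε * nstar + 1 :=
    Nat.ceil_lt_add_one (by positivity)
  have hcardR : (Sx \ S'').card = ⌈ε * nstar⌉₊ := by
    rw [card_sdiff_of_subset hsub, hcard, hcard'', Nat.sub_sub_self hcle]
  have hsplit : setDist (Sx \ S'') x + setDist S'' x = setDist Sx x := by
    unfold setDist
    exact Finset.sum_sdiff hsub
  have key : (Sx \ S'').card * setDist S'' x ≤ S''.card * setDist (Sx \ S'') x := by
    unfold setDist
    calc (Sx \ S'').card * ∑ s ∈ S'', hammingDist s x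
        = ∑ _t ∈ Sx \ S'', ∑ s ∈ S'', hammingDist s x := by
          rw [Finset.sum_const, smul_eq_mul]
      _ ≤ ∑ t ∈ Sx \ S'', ∑ _s ∈ S'', hammingDist t x :=
          Finset.sum_le_sum fun t ht => Finset.sum_le_sum fun s hs => hfar s hs t ht
      _ = S''.card * ∑ t ∈ Sx \ S'', hammingDist t x := by
          simp [Finset.sum_const, mul_comm, Finset.mul_sum]
  -- real versions
  set A : ℝ := (setDist S'' x : ℝ) with hA
  set B : ℝ := (setDist (Sx \ S'') x : ℝ) with hB
  have hA0 : 0 ≤ A := Nat.cast_nonneg _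
  have hB0 : 0 ≤ B := Nat.cast_nonneg _
  have hsumR : B + A = (setDist Sx x : ℝ) := by rw [hA, hB]; exact_mod_cast hsplit
  have hcardR'' : (S''.card : ℝ) = (nstar : ℝ) - (⌈ε * nstar⌉₊ : ℝ) := by
    rw [hcard'', Nat.cast_sub hcle]
  have keyR : (⌈ε * nstar⌉₊ : ℝ) * A ≤ ((nstar : ℝ) - (⌈ε * nstar⌉₊ : ℝ)) * B := by
    rw [← hcardR'']
    calc (⌈ε * nstar⌉₊ : ℝ) * A = (((Sx \ S'').card * setDist S'' x : ℕ) : ℝ) := by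
          push_cast [hcardR]; ring
      _ ≤ ((S''.card * setDist (Sx \ S'') x : ℕ) : ℝ) := by exact_mod_cast key
      _ = (S''.card : ℝ) * B := by push_cast; ring
  refine ⟨by rw [hA]; exact_mod_cast hcS S'' x, ?_,
    by nlinarith [mul_nonneg hd (mul_nonneg hε0.le hε0.le)], ?_⟩
  · -- main inequality
    rcases Nat.eq_zero_or_pos nstar with h0 | hpos
    · have : S'' = ∅ := by
        have : Sx = ∅ := Finset.card_eq_zero.mp (by rw [hcard, h0])
        exact Finset.subset_empty.mp (this ▸ hsub)
      have : A = 0 := by simp [hA, this, setDist]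
      rw [this]; nlinarith
    · have hn : (0 : ℝ) < nstar := by exact_mod_cast hpos
      -- nstar * B ≥ ⌈⌉ * (A + B) ≥ ε * nstar * (A + B)
      have hAB0 : (0:ℝ) ≤ A + B := by linarith
      have h1 : (nstar : ℝ) * (ε * (A + B)) ≤ (nstar : ℝ) * B := by
        have := mul_le_mul_of_nonneg_right hceil hAB0
        nlinarith [keyR]
      have h2 : ε * (A + B) ≤ B := le_of_mul_le_mul_left (by linarith) hn
      have h3 : A ≤ (1 - ε) * (A + B) := by nlinarith
      have h4 : A + B ≤ (1 + ε) * d := by rw [add_comm, hsumR]; exact hx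
      have h5 : (1 - ε) * (A + B) ≤ (1 - ε) * ((1 + ε) * d) :=
        mul_le_mul_of_nonneg_left h4 (by linarith)
      calc A ≤ (1 - ε) * (A + B) := h3
        _ ≤ (1 - ε) * ((1 + ε) * d) := h5
        _ = (1 - ε) * (1 + ε) * d := by ring
  · have h6 : (nstar:ℝ) * (1 - ε) = (nstar:ℝ) - ε * nstar := by ring
    rw [hcardR'', h6]
    linarith
end

section
/- Let \vec v be a vector of positive integers with entries summing to n*, such that the entries not equal to 1 sum to at most k−1, and \vec v is not the vector having one single entry equal to k−1 (and all remaining entries 1). Let X_{\vec v} = \vec W · \vec v where \vec W is uniform in {−1,1}^{dim(\vec v)} with independent coordinates. Then E[|X_{\vec v}|] < x^{k−1}_{n*−k+1,0}, where x^{k−1}_{n*−k+1,0} is the expected absolute endpoint of a simple ±1 random walk of n*−k+1 steps started at k−1. -/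
open Finset

noncomputable def G : List ℝ → ℝ → ℝ
  | [], c => |c|
  | a :: l, c => (G l (c + a) + G l (c - a)) / 2

lemma G_nil (c : ℝ) : G [] c = |c| := rfl
lemma G_cons (a : ℝ) (l : List ℝ) (c : ℝ) : G (a :: l) c = (G l (c + a) + G l (c - a)) / 2 := rfl

lemma G_neg : ∀ (l : List ℝ) (c : ℝ), G l (-c) = G l c
  | [], c => by simp [G_nil]
  | a :: l, c => by
    rw [G_cons, G_cons, show -c + a = -(c - a) by ring, show -c - a = -(c + a) by ring,
      G_neg l, G_neg l]
    ring

lemma G_perm {l l' : List ℝ} (h : l.Perm l') : ∀ c, G l c = G l' c := by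
  induction h with
  | nil => intro c; rfl
  | cons a _ ih => intro c; rw [G_cons, G_cons, ih, ih]
  | swap a b l =>
    intro c
    rw [G_cons, G_cons, G_cons, G_cons, G_cons, G_cons,
      show c + b + a = c + a + b by ring, show c + b - a = c - a + b by ring,
      show c - b + a = c + a - b by ring, show c - b - a = c - a - b by ring]
    ring
  | trans _ _ ih1 ih2 => intro c; rw [ih1, ih2]

lemma H_mono : ∀ (l : List ℝ) (c t t' : ℝ), 0 ≤ t → t ≤ t' →
    G l (c + t) + G l (c - t) ≤ G l (c + t') + G l (c - t')
  | [], c, t, t', ht, htt' => by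
    simp only [G_nil]
    rcases abs_cases (c + t) with ⟨e1, _⟩ | ⟨e1, _⟩ <;>
      rcases abs_cases (c - t) with ⟨e2, _⟩ | ⟨e2, _⟩ <;>
      rcases abs_cases (c + t') with ⟨e3, h3⟩ | ⟨e3, h3⟩ <;>
      rcases abs_cases (c - t') with ⟨e4, h4⟩ | ⟨e4, h4⟩ <;> linarith
  | a :: l, c, t, t', ht, htt' => by
    simp only [G_cons]
    have h1 := H_mono l (c + a) t t' ht htt'
    have h2 := H_mono l (c - a) t t' ht htt'
    rw [show c + t + a = c + a + t by ring, show c + t - a = c - a + t by ring,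
      show c - t + a = c + a - t by ring, show c - t - a = c - a - t by ring,
      show c + t' + a = c + a + t' by ring, show c + t' - a = c - a + t' by ring,
      show c - t' + a = c + a - t' by ring, show c - t' - a = c - a - t' by ring]
    linarith

lemma G_mono (l : List ℝ) {a b : ℝ} (ha : 0 ≤ a) (hab : a ≤ b) : G l a ≤ G l b := by
  have := H_mono l 0 a b ha hab
  rw [zero_add, zero_sub, zero_add, zero_sub, G_neg, G_neg] at this
  linarith

lemma G_ones_strict : ∀ (r : ℕ) (t t' : ℝ), 0 ≤ t → t + 2 ≤ t' →
    G (List.replicate r 1) t < G (List.replicate r 1) t'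
  | 0, t, t', ht, htt' => by
    simp only [List.replicate, G_nil]
    rw [abs_of_nonneg ht, abs_of_nonneg (by linarith)]
    linarith
  | r + 1, t, t', ht, htt' => by
    rw [List.replicate_succ, G_cons, G_cons]
    have h1 : G (List.replicate r 1) (t + 1) < G (List.replicate r 1) (t' + 1) :=
      G_ones_strict r (t + 1) (t' + 1) (by linarith) (by linarith)
    have h2 : G (List.replicate r 1) (t - 1) ≤ G (List.replicate r 1) (t' - 1) := by
      rcases le_total 1 t with h | h
      · exact G_mono _ (by linarith) (by linarith)
      · rw [show t - 1 = -(1 - t) by ring, G_neg]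
        exact G_mono _ (by linarith) (by linarith)
    linarith

lemma merge_le (l : List ℝ) (a b c : ℝ) (ha : 0 ≤ a) (hb : 0 ≤ b) :
    G (a :: b :: l) c ≤ G ((a + b) :: l) c := by
  simp only [G_cons]
  rw [show c + (a + b) = c + a + b by ring, show c - (a + b) = c - a - b by ring]
  rcases le_total b a with h | h
  · have := H_mono l c (a - b) (a + b) (by linarith) (by linarith)
    rw [show c + (a - b) = c + a - b by ring, show c - (a - b) = c - a + b by ring,
      show c + (a + b) = c + a + b by ring, show c - (a + b) = c - a - b by ring] at this
    linarith
  · have := H_mono l c (b - a) (a + b) (by linarith) (by linarith)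
    rw [show c + (b - a) = c - a + b by ring, show c - (b - a) = c + a - b by ring,
      show c + (a + b) = c + a + b by ring, show c - (a + b) = c - a - b by ring] at this
    linarith

lemma merge_lt_base (r : ℕ) (p q : ℝ) (hp : 1 ≤ p) (hq : 1 ≤ q) :
    G (p :: q :: List.replicate r 1) 0 < G ((p + q) :: List.replicate r 1) 0 := by
  simp only [G_cons]
  have key : G (List.replicate r 1) (0 + p + q) + G (List.replicate r 1) (0 + p - q) +
      (G (List.replicate r 1) (0 - p + q) + G (List.replicate r 1) (0 - p - q)) <
      2 * (G (List.replicate r 1) (0 + (p + q)) + G (List.replicate r 1) (0 - (p + q))) := by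
    rw [show (0:ℝ) + p + q = p + q by ring, show (0:ℝ) + (p + q) = p + q by ring,
      show (0:ℝ) - p - q = -(p + q) by ring, show (0:ℝ) - (p + q) = -(p + q) by ring,
      show (0:ℝ) + p - q = p - q by ring, show (0:ℝ) - p + q = -(p - q) by ring,
      G_neg, G_neg]
    have h : G (List.replicate r 1) |p - q| < G (List.replicate r 1) (p + q) := by
      apply G_ones_strict r _ _ (abs_nonneg _)
      rcases le_total q p with h | h
      · rw [abs_of_nonneg (by linarith)]; linarith
      · rw [abs_of_nonpos (by linarith)]; linarith
    rw [show G (List.replicate r 1) (p - q) = G (List.replicate r 1) |p - q| by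
      rcases abs_cases (p - q) with ⟨e, _⟩ | ⟨e, _⟩
      · rw [e]
      · rw [e, G_neg]]
    linarith
  linarith

lemma chain_s16 : ∀ (n r : ℕ) (bag : List ℝ), bag.length = n + 2 → (∀ x ∈ bag, 1 ≤ x) →
    G (bag ++ List.replicate r 1) 0 < G (bag.sum :: List.replicate r 1) 0
  | 0, r, bag, hlen, hone => by
    match bag, hlen with
    | [p, q], _ => 
      simpa [List.sum_cons, add_zero] using merge_lt_base r p q
        (hone p (by simp)) (hone q (by simp))
  | n + 1, r, bag, hlen, hone => by
    match bag, hlen with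
    | p :: q :: rest, hlen =>
      have h1 : G ((p :: q :: rest) ++ List.replicate r 1) 0 ≤
          G ((p + q) :: (rest ++ List.replicate r 1)) 0 := by
        exact merge_le (rest ++ List.replicate r 1) p q 0
          (by linarith [hone p (by simp)]) (by linarith [hone q (by simp)])
      have h2 : G (((p + q) :: rest) ++ List.replicate r 1) 0 <
          G (((p + q) :: rest).sum :: List.replicate r 1) 0 := by
        apply chain_s16 n r
        · simpa using by simpa using hlen
        · intro x hx
          rcases List.mem_cons.mp hx with h | h
          · subst h; linarith [hone p (by simp), hone q (by simp)]
          · exact hone x (by simp [h])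
      have hsum : ((p + q) :: rest).sum = (p :: q :: rest).sum := by simp; ring
      rw [hsum] at h2
      exact lt_of_le_of_lt h1 h2

lemma sum_eq : ∀ (m : ℕ) (x : Fin m → ℝ) (c : ℝ),
    ∑ w : Fin m → Bool, |c + ∑ j, (if w j then x j else -x j)| = 2 ^ m * G (List.ofFn x) c
  | 0, x, c => by
    simp [G_nil]
  | m + 1, x, c => by
    rw [← (Fin.consEquiv (fun _ : Fin (m + 1) => Bool)).sum_comp
      (fun w => |c + ∑ j, (if w j then x j else -x j)|)]
    rw [Fintype.sum_prod_type, Fintype.sum_bool]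
    have expand : ∀ (b : Bool) (w : Fin m → Bool),
        (∑ j, (if (Fin.consEquiv (fun _ : Fin (m + 1) => Bool)) (b, w) j then x j else -x j)) =
        (if b then x 0 else -x 0) + ∑ j : Fin m, (if w j then x j.succ else -x j.succ) := by
      intro b w
      rw [Fin.sum_univ_succ]
      congr 1
    simp only [expand]
    have h1 : ∀ w : Fin m → Bool,
        |c + (x 0 + ∑ j : Fin m, (if w j then x j.succ else -x j.succ))| =
        |(c + x 0) + ∑ j : Fin m, (if w j then (x ∘ Fin.succ) j else -(x ∘ Fin.succ) j)| := by
      intro w; rw [← add_assoc]; rfl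
    have h2 : ∀ w : Fin m → Bool,
        |c + (-x 0 + ∑ j : Fin m, (if w j then x j.succ else -x j.succ))| =
        |(c - x 0) + ∑ j : Fin m, (if w j then (x ∘ Fin.succ) j else -(x ∘ Fin.succ) j)| := by
      intro w; rw [show c + (-x 0 + ∑ j : Fin m, (if w j then x j.succ else -x j.succ))
        = (c - x 0) + ∑ j : Fin m, (if w j then x j.succ else -x j.succ) by ring]; rfl
    simp only [show (false = true) = False by simp, show (true = true) = True by simp, if_true, if_false]
    rw [show (∑ w : Fin m → Bool, |c + (x 0 + ∑ j : Fin m, (if w j then x j.succ else -x j.succ))|)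
      = ∑ w : Fin m → Bool, |(c + x 0) + ∑ j : Fin m, (if w j then (x ∘ Fin.succ) j else -(x ∘ Fin.succ) j)|
      from Finset.sum_congr rfl (fun w _ => h1 w)]
    rw [show (∑ w : Fin m → Bool, |c + (-x 0 + ∑ j : Fin m, (if w j then x j.succ else -x j.succ))|)
      = ∑ w : Fin m → Bool, |(c - x 0) + ∑ j : Fin m, (if w j then (x ∘ Fin.succ) j else -(x ∘ Fin.succ) j)|
      from Finset.sum_congr rfl (fun w _ => h2 w)]
    rw [sum_eq m (x ∘ Fin.succ) (c + x 0), sum_eq m (x ∘ Fin.succ) (c - x 0),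
      List.ofFn_succ, G_cons]
    have hc : (x ∘ Fin.succ) = fun i : Fin m => x i.succ := rfl
    rw [hc]; ring

lemma list_filter_map_sum {α : Type*} (q : α → Bool) (f : α → ℕ) : ∀ (l : List α),
    ((l.filter q).map f).sum = (l.map (fun a => if q a then f a else 0)).sum
  | [] => rfl
  | a :: l => by
    rcases hq : q a with _ | _ <;>
      simp [List.filter_cons, hq, list_filter_map_sum q f l]

/-- Let `v` be a vector of positive integers summing to `n*`, whose entries not equal to
`1` sum to at most `k − 1`, and which is not the vector with a single entry `k − 1` and
all other entries `1`.  If `X_v = W · v` with `W` uniform in `{−1,1}^{dim v}` with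
independent coordinates, then `E[|X_v|] < x^{k−1}_{n*−k+1,0}`, the expected absolute
endpoint of a simple ±1 random walk of `n*−k+1` steps started at `k−1`. -/
theorem weighted_walk_lt_special (k nstar m : ℕ) (hk : 2 ≤ k) (hkn : k ≤ nstar)
    (v : Fin m → ℕ) (hpos : ∀ j, 0 < v j) (hsum : ∑ j, v j = nstar)
    (hbig : ∑ j ∈ Finset.univ.filter (fun j => v j ≠ 1), v j ≤ k - 1)
    (hne : ¬ ∃ j, v j = k - 1 ∧ ∀ j', j' ≠ j → v j' = 1) :
    (∑ w : Fin m → Bool, |∑ j, (if w j then (v j : ℝ) else -(v j : ℝ))|) / 2 ^ m <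
      walkExp ((k : ℤ) - 1) 0 (nstar - k + 1) := by
  set r : ℕ := nstar - k + 1 with hr
  -- right-hand side
  have hRHS : walkExp ((k : ℤ) - 1) 0 r =
      G (List.replicate r (1 : ℝ)) ((k : ℝ) - 1) := by
    unfold walkExp
    rw [Fintype.sum_prod_type]
    have h0 : ∀ p1 : Fin 0 → Bool, (∑ j : Fin 0, (if p1 j then (2:ℝ) else -2)) = 0 := by
      intro p1; simp
    have huniq : ∀ p1 : Fin 0 → Bool,
        (∑ q : Fin r → Bool,
          |(((k : ℤ) - 1 : ℤ) : ℝ) + (∑ j : Fin 0, (if p1 j then (2:ℝ) else -2)) +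
            (∑ j, (if q j then (1:ℝ) else -1))|) =
        2 ^ r * G (List.ofFn (fun _ : Fin r => (1:ℝ))) ((k : ℝ) - 1) := by
      intro p1
      rw [← sum_eq r (fun _ : Fin r => (1:ℝ)) ((k : ℝ) - 1)]
      apply Finset.sum_congr rfl
      intro q _
      rw [h0 p1]
      push_cast
      ring_nf
    rw [Finset.sum_congr rfl (fun p1 _ => huniq p1), Finset.sum_const]
    simp [List.ofFn_const]
    rw [hr, List.replicate_succ]
  -- left-hand side
  have hLHS : (∑ w : Fin m → Bool, |∑ j, (if w j then (v j : ℝ) else -(v j : ℝ))|) =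
      2 ^ m * G (List.ofFn (fun j => (v j : ℝ))) 0 := by
    rw [← sum_eq m (fun j => (v j : ℝ)) 0]
    apply Finset.sum_congr rfl
    intro w _
    rw [zero_add]
  rw [hLHS, hRHS, mul_comm ((2:ℝ) ^ m), mul_div_assoc,
    div_self (by positivity : (2:ℝ) ^ m ≠ 0), mul_one]
  -- combinatorial setup
  set Jl : List (Fin m) := (List.finRange m).filter (fun j => decide (v j ≠ 1)) with hJl
  have hmemJl : ∀ j : Fin m, j ∈ Jl ↔ v j ≠ 1 := by
    intro j
    simp [hJl, List.mem_filter, List.mem_finRange]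
  set Bnat : List ℕ := Jl.map v with hBnat
  have hfilterB : (List.ofFn v).filter (fun a => decide (a ≠ 1)) = Bnat := by
    rw [List.ofFn_eq_map, List.filter_map]
    rfl
  set Ones : List ℕ := (List.ofFn v).filter (fun a => !(decide (a ≠ 1))) with hOnes
  have hOnesrep : Ones = List.replicate Ones.length 1 := by
    apply List.eq_replicate_of_mem
    intro b hb
    have := List.of_mem_filter hb
    simpa using this
  have perm1 : (Bnat ++ Ones).Perm (List.ofFn v) := by
    rw [← hfilterB]
    exact List.filter_append_perm _ _
  -- sums
  have hsumL : (List.ofFn v).sum = nstar := by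
    rw [List.sum_ofFn, hsum]
  have hBsum : Bnat.sum = ∑ j ∈ Finset.univ.filter (fun j => v j ≠ 1), v j := by
    rw [Finset.sum_filter, Fin.sum_univ_def, hBnat, hJl, list_filter_map_sum]
    simp
  have hOnessum : Ones.sum = Ones.length := by
    rw [hOnesrep]
    simp [List.sum_replicate]
  have htot : Bnat.sum + Ones.length = nstar := by
    rw [← hOnessum, ← List.sum_append]
    rw [perm1.sum_eq, hsumL]
  have hs : Bnat.sum ≤ k - 1 := hBsum ▸ hbig
  set d : ℕ := k - 1 - Bnat.sum with hd
  have hlen : Ones.length = d + r := by omega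
  -- the permutation
  have perm2 : (List.ofFn (fun j => (v j : ℝ))).Perm
      ((Bnat.map (Nat.cast : ℕ → ℝ) ++ List.replicate d (1:ℝ)) ++ List.replicate r (1:ℝ)) := by
    have : List.ofFn (fun j => (v j : ℝ)) = (List.ofFn v).map (Nat.cast : ℕ → ℝ) := by
      rw [List.map_ofFn]
      rfl
    rw [this]
    have hO2 : Ones = List.replicate d 1 ++ List.replicate r 1 := by
      rw [hOnesrep, hlen, ← List.replicate_add]
    have := (perm1.symm).map (Nat.cast : ℕ → ℝ)
    rw [hO2] at this
    simpa [List.map_append, List.map_replicate, List.append_assoc] using this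
  set bag : List ℝ := Bnat.map (Nat.cast : ℕ → ℝ) ++ List.replicate d (1:ℝ) with hbag
  have hbagmem : ∀ x ∈ bag, (1:ℝ) ≤ x := by
    intro x hx
    rcases List.mem_append.mp hx with h | h
    · rcases List.mem_map.mp h with ⟨a, ha, rfl⟩
      rcases List.mem_map.mp (hBnat ▸ ha) with ⟨j, _, rfl⟩
      exact_mod_cast hpos j
    · rw [List.eq_of_mem_replicate h]
  have hbagsum : bag.sum = (k:ℝ) - 1 := by
    rw [hbag, List.sum_append, List.sum_replicate, nsmul_eq_mul, mul_one,
      ← Nat.cast_list_sum, ← Nat.cast_add,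
      show Bnat.sum + d = k - 1 by omega, Nat.cast_sub (by omega : 1 ≤ k), Nat.cast_one]
  have hlen2 : 2 ≤ bag.length := by
    by_contra hc
    push_neg at hc
    have hJd : Jl.length + d ≤ 1 := by
      have : bag.length = Jl.length + d := by simp [hbag, hBnat]
      omega
    rcases hJlc : Jl with _ | ⟨i0, tl⟩
    · have hall : ∀ j, v j = 1 := by
        intro j
        by_contra h
        have := (hmemJl j).mpr h
        rw [hJlc] at this
        simp at this
      have hB0 : Bnat.sum = 0 := by rw [hBnat, hJlc]; rfl
      have hm : nstar = m := by
        rw [← hsum]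
        simp [hall]
      have hk2 : k = 2 := by
        rw [hJlc] at hJd
        simp at hJd
        omega
      have hm0 : 0 < m := by omega
      exact hne ⟨⟨0, hm0⟩, by rw [hall]; omega, fun j' _ => hall j'⟩
    · rcases tl with _ | ⟨i1, tl2⟩
      · have hd0 : d = 0 := by
          rw [hJlc] at hJd
          simp at hJd
          omega
        have hB : Bnat = [v i0] := by rw [hBnat, hJlc]; rfl
        have hvi0 : v i0 = k - 1 := by
          have : Bnat.sum = v i0 := by rw [hB]; simp
          omega
        refine hne ⟨i0, hvi0, fun j' hj' => ?_⟩
        by_contra h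
        have := (hmemJl j').mpr h
        rw [hJlc] at this
        simp at this
        exact hj' this
      · rw [hJlc] at hJd
        simp at hJd
        omega
  obtain ⟨n, hn⟩ : ∃ n, bag.length = n + 2 := ⟨bag.length - 2, by omega⟩
  rw [G_perm perm2 0]
  calc G (bag ++ List.replicate r 1) 0 < G (bag.sum :: List.replicate r 1) 0 :=
        chain_s16 n r bag hn hbagmem
    _ = G (List.replicate r 1) ((k:ℝ) - 1) := by
        rw [hbagsum, G_cons, zero_add, zero_sub, G_neg]
        ring
end
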